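/- arXiv:1405.1799 — 9 statements merged into one kernel-verified Lean document; each statement's English description precedes it below -/
import Mathlib

section
/- For real σ > 0, 0 < a ≤ 1, and z ∈ [-1,1] with z ≠ 0 and z ≠ 1 (or σ > 1 and z = 1), the series Φ(σ,a,z) = ∑_{n≥0} z^n/(n+a)^σ is strictly positive. -/
open Filter Finset

/-- For real σ > 0, 0 < a ≤ 1, and z ∈ [-1,1] with z ≠ 0 and z ≠ 1
(or σ > 1 and z = 1), the series Φ(σ,a,z) = ∑_{n≥0} z^n/(n+a)^σ converges to a
strictly positive value. -/
theorem lerchPhi_pos (σ a z : ℝ) (ha : 0 < a) (ha1 : a ≤ 1)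
    (hz : (0 < σ ∧ -1 ≤ z ∧ z ≤ 1 ∧ z ≠ 0 ∧ z ≠ 1) ∨ (1 < σ ∧ z = 1)) :
    ∃ L : ℝ, 0 < L ∧
      Tendsto (fun N : ℕ => ∑ n ∈ range N, z ^ n / ((n : ℝ) + a) ^ σ)
        atTop (nhds L) := by
  have hσ : 0 < σ := by rcases hz with ⟨h, _⟩ | ⟨h, _⟩ <;> linarith
  have hz1 : -1 ≤ z ∧ z ≤ 1 := by
    rcases hz with ⟨_, h1, h2, _⟩ | ⟨_, h⟩
    · exact ⟨h1, h2⟩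
    · subst h; norm_num
  set f : ℕ → ℝ := fun n => z ^ n / ((n : ℝ) + a) ^ σ with hf
  have hdpos : ∀ n : ℕ, (0 : ℝ) < ((n : ℝ) + a) ^ σ := fun n =>
    Real.rpow_pos_of_pos (by positivity) σ
  have hdmono : ∀ m n : ℕ, m ≤ n → ((m : ℝ) + a) ^ σ ≤ ((n : ℝ) + a) ^ σ := by
    intro m n hmn
    have h : (m : ℝ) ≤ (n : ℝ) := Nat.cast_le.mpr hmn
    exact Real.rpow_le_rpow (by positivity) (by linarith) hσ.le
  -- Convergence
  obtain ⟨L, hL⟩ : ∃ L, Tendsto (fun N : ℕ => ∑ n ∈ range N, f n) atTop (nhds L) := by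
    rcases eq_or_lt_of_le hz1.1 with hneg1 | hgt
    · -- z = -1 : alternating series test
      have hanti : Antitone fun n : ℕ => (((n : ℝ) + a) ^ σ)⁻¹ := fun m n hmn =>
        inv_anti₀ (hdpos m) (hdmono m n hmn)
      have h0 : Tendsto (fun n : ℕ => (((n : ℝ) + a) ^ σ)⁻¹) atTop (nhds 0) := by
        apply Tendsto.inv_tendsto_atTop
        exact (tendsto_rpow_atTop hσ).comp
          (tendsto_atTop_add_const_right atTop a tendsto_natCast_atTop_atTop)
      obtain ⟨l, hl⟩ := hanti.tendsto_alternating_series_of_tendsto_zero h0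
      refine ⟨l, ?_⟩
      have he : (fun N : ℕ => ∑ n ∈ range N, f n)
          = fun N : ℕ => ∑ i ∈ range N, (-1) ^ i * (((i : ℝ) + a) ^ σ)⁻¹ := by
        funext N
        refine Finset.sum_congr rfl fun n _ => ?_
        simp only [hf, ← hneg1, div_eq_mul_inv]
      rw [he]
      exact hl
    · rcases lt_or_eq_of_le hz1.2 with hlt | heq1
      · -- |z| < 1 : absolute convergence by geometric comparison
        have habs : |z| < 1 := abs_lt.mpr ⟨hgt, hlt⟩
        have hsum : Summable f := by
          apply Summable.of_abs
          apply Summable.of_nonneg_of_le (f := fun n : ℕ => |z| ^ n * (a ^ σ)⁻¹)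
            (fun n => abs_nonneg _)
          · intro n
            rw [hf]
            simp only
            rw [abs_div, abs_pow, abs_of_pos (hdpos n), div_eq_mul_inv]
            apply mul_le_mul_of_nonneg_left _ (pow_nonneg (abs_nonneg z) n)
            apply inv_anti₀ (Real.rpow_pos_of_pos ha σ)
            exact Real.rpow_le_rpow ha.le (by linarith [Nat.cast_nonneg (α := ℝ) n]) hσ.le
          · exact (summable_geometric_of_lt_one (abs_nonneg z) habs).mul_right _
        exact ⟨_, hsum.hasSum.tendsto_sum_nat⟩
      · -- z = 1 : p-series comparison, σ > 1
        have hσ1 : 1 < σ := by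
          rcases hz with ⟨_, _, _, _, hne⟩ | ⟨h, _⟩
          · exact absurd heq1 hne
          · exact h
        have hsum : Summable f := by
          apply Summable.of_nonneg_of_le
            (f := fun n : ℕ => (a ^ σ)⁻¹ * (1 / ((n : ℝ) + 1) ^ σ))
          · intro n; rw [hf]; positivity
          · intro n
            rw [hf]
            simp only [heq1, one_pow]
            have h1 : ((n : ℝ) + 1) * a ≤ (n : ℝ) + a := by
              nlinarith [Nat.cast_nonneg (α := ℝ) n]
            have h2 : ((((n : ℝ) + 1) * a)) ^ σ ≤ ((n : ℝ) + a) ^ σ :=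
              Real.rpow_le_rpow (by positivity) h1 hσ.le
            calc (1 : ℝ) / ((n : ℝ) + a) ^ σ
                ≤ 1 / ((((n : ℝ) + 1) * a)) ^ σ :=
                  one_div_le_one_div_of_le (Real.rpow_pos_of_pos (by positivity) σ) h2
              _ = (a ^ σ)⁻¹ * (1 / ((n : ℝ) + 1) ^ σ) := by
                  rw [Real.mul_rpow (by positivity) ha.le, one_div, mul_inv, one_div]
                  ring
          · apply Summable.mul_left
            have h3 : Summable (fun n : ℕ => 1 / ((n : ℝ)) ^ σ) :=
              Real.summable_one_div_nat_rpow.mpr hσ1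
            have h4 := (summable_nat_add_iff (f := fun n : ℕ => 1 / ((n : ℝ)) ^ σ) 1).mpr h3
            convert h4 using 2 with n
            push_cast
            · rfl
            · norm_num
        exact ⟨_, hsum.hasSum.tendsto_sum_nat⟩
  refine ⟨L, ?_, hL⟩
  have hzne : z ≠ 0 := by
    rcases hz with ⟨_, _, _, h, _⟩ | ⟨_, h⟩
    · exact h
    · subst h; norm_num
  -- Positivity
  rcases lt_or_gt_of_ne hzne with hzneg | hzpos
  · -- z < 0 : group in pairs along even partial sums
    have hpair : ∀ k : ℕ, 0 ≤ f (2 * k) + f (2 * k + 1) := by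
      intro k
      have hw : (0 : ℝ) ≤ z ^ (2 * k) := (even_two_mul k).pow_nonneg z
      have hA : (0 : ℝ) < (((2 * k : ℕ) : ℝ) + a) ^ σ := hdpos (2 * k)
      have hB : (0 : ℝ) < (((2 * k + 1 : ℕ) : ℝ) + a) ^ σ := hdpos (2 * k + 1)
      have hAB := hdmono (2 * k) (2 * k + 1) (Nat.le_succ _)
      have h1 : ((((2 * k + 1 : ℕ) : ℝ) + a) ^ σ)⁻¹ ≤ ((((2 * k : ℕ) : ℝ) + a) ^ σ)⁻¹ :=
        inv_anti₀ hA hAB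
      have hfe : f (2 * k) + f (2 * k + 1)
          = z ^ (2 * k) * ((((2 * k : ℕ) : ℝ) + a) ^ σ)⁻¹
            + z ^ (2 * k) * z * ((((2 * k + 1 : ℕ) : ℝ) + a) ^ σ)⁻¹ := by
        simp only [hf, div_eq_mul_inv, pow_succ]
      rw [hfe]
      nlinarith [mul_nonneg hw (sub_nonneg.mpr h1),
        mul_nonneg (mul_nonneg hw (by linarith [hz1.1] : (0 : ℝ) ≤ 1 + z))
          (inv_nonneg.mpr hB.le)]
    have hS2 : ∀ N : ℕ, f 0 + f 1 ≤ ∑ n ∈ range (2 * (N + 1)), f n := by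
      intro N
      induction N with
      | zero => norm_num [Finset.sum_range_succ]
      | succ M ih =>
        have he : 2 * (M + 1 + 1) = 2 * (M + 1) + 1 + 1 := by ring
        rw [he, Finset.sum_range_succ, Finset.sum_range_succ]
        have := hpair (M + 1)
        linarith
    have h01 : 0 < f 0 + f 1 := by
      have hA : (0 : ℝ) < a ^ σ := Real.rpow_pos_of_pos ha σ
      have hB : (0 : ℝ) < (1 + a) ^ σ := Real.rpow_pos_of_pos (by linarith) σ
      have hAB : a ^ σ < (1 + a) ^ σ := Real.rpow_lt_rpow ha.le (by linarith) hσ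
      have hf0 : f 0 = (a ^ σ)⁻¹ := by simp [hf]
      have hf1 : f 1 = z * ((1 + a) ^ σ)⁻¹ := by
        simp [hf, div_eq_mul_inv, add_comm]
      rw [hf0, hf1]
      have h2 : ((1 + a) ^ σ)⁻¹ < (a ^ σ)⁻¹ := by
        apply inv_strictAnti₀ hA hAB
      nlinarith [mul_nonneg (by linarith [hz1.1] : (0 : ℝ) ≤ 1 + z) (inv_nonneg.mpr hB.le)]
    have h2 : Tendsto (fun N : ℕ => ∑ n ∈ range (2 * (N + 1)), f n) atTop (nhds L) :=
      hL.comp (tendsto_atTop_atTop_of_monotone (fun _ _ h => by omega) (fun b => ⟨b, by omega⟩))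
    exact lt_of_lt_of_le h01 (ge_of_tendsto h2 (Eventually.of_forall hS2))
  · -- z > 0 : all terms positive
    have hfpos : ∀ n, 0 < f n := fun n => div_pos (pow_pos hzpos n) (hdpos n)
    have hge : f 0 ≤ L := by
      apply ge_of_tendsto hL
      filter_upwards [eventually_ge_atTop 1] with N hN
      calc f 0 = ∑ n ∈ range 1, f n := by simp
        _ ≤ ∑ n ∈ range N, f n :=
          Finset.sum_le_sum_of_subset_of_nonneg (Finset.range_subset_range.mpr hN)
            (fun n _ _ => (hfpos n).le)
    exact lt_of_lt_of_le (hfpos 0) hge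
end

section
/- Define H(a,x) = e^{(1-a)x}/(e^x − 1) − 1/x for x > 0 and 0 < a ≤ 1. Then H(a,x) < 0 for all x > 0 if and only if a ≥ 1/2. -/
/-- With H(a,x) = e^{(1-a)x}/(e^x − 1) − 1/x for x > 0 and 0 < a ≤ 1,
H(a,x) < 0 for all x > 0 if and only if a ≥ 1/2. -/
theorem H_neg_iff (a : ℝ) (ha : 0 < a) (ha1 : a ≤ 1) :
    (∀ x : ℝ, 0 < x →
        Real.exp ((1 - a) * x) / (Real.exp x - 1) - 1 / x < 0) ↔ 1 / 2 ≤ a := by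
  constructor
  · intro h
    by_contra hlt
    push_neg at hlt
    set x : ℝ := 1 / 2 - a with hxdef
    clear_value x
    have hx : 0 < x := by simp [hxdef]; linarith
    have hx1 : x ≤ 1 := by simp [hxdef]; linarith
    have hB : 0 < Real.exp x - 1 := by
      have := Real.add_one_lt_exp (ne_of_gt hx)
      linarith
    have hH := h x hx
    -- H < 0 means exp((1-a)x) * x < exp x - 1
    have hkey : Real.exp ((1 - a) * x) * x < Real.exp x - 1 := by
      have h1 : Real.exp ((1 - a) * x) / (Real.exp x - 1) < 1 / x := by linarith
      rw [div_lt_div_iff₀ hB hx] at h1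
      linarith
    -- upper bound on exp x
    have hub : Real.exp x ≤ 1 + x + x ^ 2 / 2 + x ^ 3 := by
      have := Real.exp_bound' hx.le hx1 (n := 3) (by norm_num)
      simp [Finset.sum_range_succ, Nat.factorial] at this
      nlinarith [pow_pos hx 3]
    -- lower bound on exp ((1-a)x)
    have hlb : 1 + (1 - a) * x ≤ Real.exp ((1 - a) * x) := by
      linarith [Real.add_one_le_exp ((1 - a) * x)]
    have h1a : 1 - a = 1 / 2 + x := by simp [hxdef]; ring
    have hmul : (1 + (1 - a) * x) * x ≤ Real.exp ((1 - a) * x) * x :=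
      mul_le_mul_of_nonneg_right hlb hx.le
    have hexp : (1 + (1 - a) * x) * x = x + x ^ 2 / 2 + x ^ 3 := by
      rw [h1a]; ring
    nlinarith [hmul, hexp, hkey, hub]
  · intro ha2 x hx
    have hB : 0 < Real.exp x - 1 := by
      have := Real.add_one_lt_exp (ne_of_gt hx)
      linarith
    have hA : Real.exp ((1 - a) * x) ≤ Real.exp (x / 2) := by
      apply Real.exp_le_exp.2
      nlinarith
    have hsinh : x / 2 < Real.sinh (x / 2) :=
      Real.self_lt_sinh_iff.2 (by positivity)
    rw [Real.sinh_eq] at hsinh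
    have hexp2 : Real.exp (x / 2) * Real.exp (x / 2) = Real.exp x := by
      rw [← Real.exp_add]; ring_nf
    have hinv : Real.exp (-(x / 2)) * Real.exp (x / 2) = 1 := by
      rw [← Real.exp_add]; simp
    have hu : 0 < Real.exp (x / 2) := Real.exp_pos _
    -- key: x * exp(x/2) < exp x - 1
    have hkey : x * Real.exp (x / 2) < Real.exp x - 1 := by
      nlinarith
    have h1 : Real.exp ((1 - a) * x) / (Real.exp x - 1) < 1 / x := by
      rw [div_lt_div_iff₀ hB hx]
      have : Real.exp ((1 - a) * x) * x ≤ Real.exp (x / 2) * x :=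
        mul_le_mul_of_nonneg_right hA hx.le
      nlinarith
    linarith
end

section
/- For 0 < a ≤ 1 and x > 0, define h(a,x) = x e^{(1-a)x} − e^x + 1. If a ≥ 1/2 then h(a,x) < 0 for all x > 0. -/
/-- For 0 < a ≤ 1 with a ≥ 1/2, h(a,x) = x e^{(1-a)x} − e^x + 1 < 0
for all x > 0. -/
theorem h_neg_of_half_le (a : ℝ) (ha : 0 < a) (ha1 : a ≤ 1) (haha : 1 / 2 ≤ a) :
    ∀ x : ℝ, 0 < x → x * Real.exp ((1 - a) * x) - Real.exp x + 1 < 0 := by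
  intro x hx
  have h1 : x * Real.exp ((1 - a) * x) ≤ x * Real.exp (x / 2) := by
    apply mul_le_mul_of_nonneg_left _ hx.le
    exact Real.exp_le_exp.2 (by nlinarith)
  have hs := Real.self_lt_sinh_iff.2 (by positivity : (0:ℝ) < x / 2)
  rw [Real.sinh_eq] at hs
  have he : Real.exp (x/2) * Real.exp (-(x/2)) = 1 := by
    rw [← Real.exp_add]; simp
  have he2 : Real.exp (x/2) * Real.exp (x/2) = Real.exp x := by
    rw [← Real.exp_add]; ring_nf
  have hp : 0 < Real.exp (x/2) := Real.exp_pos _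
  nlinarith [hp]
end

section
/- For real s with 0 < s < 1 and 0 < a ≤ 1, Γ(s)·ζ(s,a) = ∫_0^∞ H(a,x) x^{s-1} dx, where H(a,x) = e^{(1-a)x}/(e^x−1) − 1/x. -/
open MeasureTheory Set
open Complex Filter Asymptotics

noncomputable def fC (a : ℝ) (x : ℝ) : ℂ := ((Real.exp ((1-a)*x) / (Real.exp x - 1) : ℝ) : ℂ)
noncomputable def Pfun : ℝ → ℂ := indicator (Ioc 0 1) (fun x : ℝ => (x:ℂ) ^ (-1:ℂ))
noncomputable def Qfun : ℝ → ℂ := indicator (Ioi 1) (fun x : ℝ => (x:ℂ) ^ (-1:ℂ))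
noncomputable def Wfun (a : ℝ) : ℝ → ℂ := fun x => fC a x - Pfun x
noncomputable def HC (a : ℝ) (x : ℝ) : ℂ := fC a x - ((x:ℂ))⁻¹

lemma expx_sub_one_pos {x : ℝ} (hx : 0 < x) : 0 < Real.exp x - 1 := by
  linarith [Real.add_one_le_exp x]

lemma fC_contOn (a : ℝ) : ContinuousOn (fC a) (Ioi 0) := by
  apply Continuous.comp_continuousOn continuous_ofReal
  apply ContinuousOn.div
  · exact (Real.continuous_exp.comp (continuous_const.mul continuous_id)).continuousOn
  · exact (Real.continuous_exp.sub continuous_const).continuousOn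
  · intro x hx; exact (expx_sub_one_pos hx).ne'

lemma cpow_neg_one_contOn : ContinuousOn (fun x : ℝ => (x:ℂ) ^ (-1:ℂ)) (Ioi 0) := by
  have : ∀ x ∈ Ioi (0:ℝ), (x:ℂ) ^ (-1:ℂ) = ((x:ℂ))⁻¹ := by
    intro x hx; rw [cpow_neg_one]
  apply ContinuousOn.congr _ this
  exact (continuous_ofReal.continuousOn).inv₀ (fun x hx => ofReal_ne_zero.mpr (ne_of_gt hx))

lemma locInt_fC (a : ℝ) : LocallyIntegrableOn (fC a) (Ioi 0) :=
  (fC_contOn a).locallyIntegrableOn measurableSet_Ioi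

lemma locInt_cpow : LocallyIntegrableOn (fun x : ℝ => (x:ℂ) ^ (-1:ℂ)) (Ioi 0) :=
  cpow_neg_one_contOn.locallyIntegrableOn measurableSet_Ioi

lemma locInt_indicator {g : ℝ → ℂ} (hg : LocallyIntegrableOn g (Ioi 0)) {t : Set ℝ}
    (ht : MeasurableSet t) : LocallyIntegrableOn (indicator t g) (Ioi 0) := by
  intro x hx
  obtain ⟨U, hU, hInt⟩ := hg x hx
  exact ⟨U, hU, hInt.indicator ht⟩

lemma locInt_P : LocallyIntegrableOn Pfun (Ioi 0) := locInt_indicator locInt_cpow measurableSet_Ioc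
lemma locInt_Q : LocallyIntegrableOn Qfun (Ioi 0) := locInt_indicator locInt_cpow measurableSet_Ioi
lemma locInt_W (a : ℝ) : LocallyIntegrableOn (Wfun a) (Ioi 0) := (locInt_fC a).sub locInt_P
lemma HC_contOn (a : ℝ) : ContinuousOn (HC a) (Ioi 0) :=
  (fC_contOn a).sub ((continuous_ofReal.continuousOn).inv₀
    (fun x hx => ofReal_ne_zero.mpr (ne_of_gt hx)))

lemma locInt_HC (a : ℝ) : LocallyIntegrableOn (HC a) (Ioi 0) :=
  (HC_contOn a).locallyIntegrableOn measurableSet_Ioi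

-- big-O of fC at top
lemma fC_bigO_top {a : ℝ} (ha : 0 < a) : fC a =O[atTop] fun x => Real.exp (-a*x) := by
  rw [isBigO_iff]
  refine ⟨(1 - Real.exp (-1))⁻¹, ?_⟩
  filter_upwards [eventually_ge_atTop (1:ℝ)] with x hx
  have hx0 : (0:ℝ) < x := by linarith
  have h2 : Real.exp x - 1 > 0 := expx_sub_one_pos hx0
  have key : Real.exp ((1-a)*x) / (Real.exp x - 1) = Real.exp (-a*x) / (1 - Real.exp (-x)) := by
    have h4 : (0:ℝ) < 1 - Real.exp (-x) := by
      have : Real.exp (-x) < 1 := Real.exp_lt_one_iff.mpr (by linarith)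
      linarith
    have hB : Real.exp (-x) * Real.exp x = 1 := by rw [← Real.exp_add]; simp
    have hA : Real.exp ((1-a)*x) = Real.exp x * Real.exp (-a*x) := by
      rw [← Real.exp_add]; ring_nf
    rw [div_eq_div_iff h2.ne' h4.ne', hA]
    linear_combination (-(Real.exp (-a*x))) * hB
  rw [fC, key]
  have h4 : Real.exp (-x) ≤ Real.exp (-1) := Real.exp_le_exp.mpr (by linarith)
  have h5 : (0:ℝ) < 1 - Real.exp (-1) := by
    have : Real.exp (-1) < 1 := Real.exp_lt_one_iff.mpr (by norm_num)
    linarith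
  have h6 : (0:ℝ) < 1 - Real.exp (-x) := by linarith
  rw [Complex.norm_real, Real.norm_eq_abs, Real.norm_eq_abs, abs_of_pos (by positivity),
    abs_of_pos (Real.exp_pos _), inv_mul_eq_div, div_le_div_iff₀ h6 h5]
  nlinarith [Real.exp_pos (-a*x)]

lemma hasSum_fC {a : ℝ} (x : ℝ) (hx : 0 < x) :
    HasSum (fun n : ℕ => ((1:ℂ) * Real.exp (-(n+a) * x))) (fC a x) := by
  have h1 : Real.exp (-x) < 1 := Real.exp_lt_one_iff.mpr (by linarith)
  have h0 : (0:ℝ) ≤ Real.exp (-x) := (Real.exp_pos _).le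
  have hd1 : (0:ℝ) < 1 - Real.exp (-x) := by linarith
  have hd2 : (0:ℝ) < Real.exp x - 1 := expx_sub_one_pos hx
  have hg2 := (hasSum_geometric_of_lt_one h0 h1).mul_left (Real.exp (-a * x))
  have key : ∀ n : ℕ, Real.exp (-a*x) * (Real.exp (-x))^n = Real.exp (-(n+a)*x) := by
    intro n
    rw [← Real.exp_nat_mul, ← Real.exp_add]
    ring_nf
  simp_rw [key] at hg2
  have hval : Real.exp (-a*x) * (1 - Real.exp (-x))⁻¹
      = Real.exp ((1-a)*x) / (Real.exp x - 1) := by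
    rw [inv_eq_one_div, mul_one_div, div_eq_div_iff hd1.ne' hd2.ne']
    rw [mul_sub, mul_sub, mul_one, mul_one, ← Real.exp_add, ← Real.exp_add]
    ring_nf
  rw [hval] at hg2
  have := Complex.hasSum_ofReal.mpr hg2
  simpa only [one_mul, fC] using this

lemma summable_aux {a : ℝ} (ha : 0 < a) {r : ℝ} (hr : 1 < r) :
    Summable (fun n : ℕ => 1 / ((n:ℝ)+a) ^ r) := by
  rw [← summable_nat_add_iff 1]
  have base := (summable_nat_add_iff (f := fun n : ℕ => 1/(n:ℝ)^r) 1).mpr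
    (Real.summable_one_div_nat_rpow.mpr hr)
  apply Summable.of_nonneg_of_le (fun n => by positivity) (fun n => ?_) base
  have h1 : (0:ℝ) < ((n+1 : ℕ):ℝ) := by exact_mod_cast Nat.succ_pos n
  apply one_div_le_one_div_of_le (Real.rpow_pos_of_pos h1 r)
  apply Real.rpow_le_rpow h1.le (by push_cast; linarith) (by linarith)

lemma mellin_fC {a : ℝ} (ha : 0 < a) (ha1 : a ≤ 1) {z : ℂ} (hz : 1 < z.re) :
    mellin (fC a) z = Complex.Gamma z * HurwitzZeta.hurwitzZeta (a : UnitAddCircle) z := by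
  have hp : ∀ n : ℕ, (1:ℂ) = 0 ∨ 0 < (n:ℝ) + a := fun n => Or.inr (by positivity)
  have hs : 0 < z.re := by linarith
  have hF : ∀ t ∈ Ioi (0:ℝ), HasSum (fun n : ℕ => (1:ℂ) * Real.exp (-((n:ℝ)+a) * t)) (fC a t) :=
    fun t ht => hasSum_fC t ht
  have h_sum : Summable (fun n : ℕ => ‖(1:ℂ)‖ / ((n:ℝ)+a) ^ z.re) := by
    simpa using summable_aux ha (by exact_mod_cast hz)
  have H1 := hasSum_mellin hp hs hF h_sum
  have H2 := (HurwitzZeta.hasSum_hurwitzZeta_of_one_lt_re ⟨ha.le, ha1⟩ hz).mul_left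
    (Complex.Gamma z)
  apply H1.unique
  convert H2 using 2 with n
  · rfl
  push_cast
  rw [mul_one, mul_one_div]

lemma mellinConv_fC {a : ℝ} (ha : 0 < a) {z : ℂ} (hz : 1 < z.re) :
    MellinConvergent (fC a) z := by
  refine mellinConvergent_of_isBigO_rpow_exp ha (locInt_fC a) (fC_bigO_top ha) ?_ hz
  -- fC = O(x^{-1}) at 0
  rw [isBigO_iff]
  refine ⟨Real.exp 1, ?_⟩
  filter_upwards [Ioc_mem_nhdsGT_of_mem (by norm_num : (0:ℝ) ∈ Ico (0:ℝ) 1)] with x hx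
  obtain ⟨hx0, hx1⟩ := hx
  have h2 : (0:ℝ) < Real.exp x - 1 := expx_sub_one_pos hx0
  have hxx : x ≤ Real.exp x - 1 := by linarith [Real.add_one_le_exp x]
  have e1 : ‖fC a x‖ = Real.exp ((1-a)*x)/(Real.exp x - 1) := by
    rw [fC, Complex.norm_real, Real.norm_eq_abs,
      _root_.abs_of_nonneg (div_nonneg (Real.exp_pos _).le h2.le)]
  have e2 : ‖x ^ (-1:ℝ)‖ = x⁻¹ := by
    rw [Real.norm_eq_abs, Real.rpow_neg_one, abs_of_pos (by positivity)]
  rw [e1, e2]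
  have hnum : Real.exp ((1-a)*x) ≤ Real.exp 1 := Real.exp_le_exp.mpr (by nlinarith)
  calc Real.exp ((1-a)*x)/(Real.exp x - 1) ≤ Real.exp 1 / x :=
        div_le_div₀ (Real.exp_pos 1).le hnum hx0 hxx
    _ = Real.exp 1 * x⁻¹ := by rw [div_eq_mul_inv]

lemma hasMellin_P {z : ℂ} (hz : 1 < z.re) : HasMellin Pfun z (1/(z-1)) := by
  have h := hasMellin_cpow_Ioc (-1) (s := z) (by simp; linarith)
  simpa [Pfun, sub_eq_add_neg] using h

lemma hasMellin_Q {z : ℂ} (hz1 : z.re < 1) : HasMellin Qfun z (-(1/(z-1))) := by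
  have hz2 : (z - 2).re < -1 := by simp [Complex.sub_re]; linarith
  have hint : IntegrableOn (fun x : ℝ => (x:ℂ) ^ (z-2)) (Ioi 1) :=
    integrableOn_Ioi_cpow_of_lt hz2 one_pos
  have hcong : ∀ x ∈ Ioi (1:ℝ), (x:ℂ) ^ (z-1) • ((x:ℂ) ^ (-1:ℂ)) = (x:ℂ) ^ (z-2) := by
    intro x hx
    have hx1 : (0:ℝ) < x := lt_trans one_pos hx
    have hx0 : (x:ℂ) ≠ 0 := ofReal_ne_zero.mpr hx1.ne'
    rw [smul_eq_mul, ← cpow_add _ _ hx0]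
    ring_nf
  have hsub : Ioi (1:ℝ) ⊆ Ioi 0 := fun x hx => mem_Ioi.mpr (lt_trans one_pos (mem_Ioi.mp hx))
  have key : (fun x : ℝ => (x:ℂ) ^ (z-1) • Qfun x)
      = indicator (Ioi 1) (fun x : ℝ => (x:ℂ) ^ (z-1) • ((x:ℂ) ^ (-1:ℂ))) := by
    ext x
    rw [Qfun, indicator_smul_apply]
  constructor
  · rw [MellinConvergent, IntegrableOn, key, integrable_indicator_iff measurableSet_Ioi,
      IntegrableOn, Measure.restrict_restrict_of_subset hsub, ← IntegrableOn]
    exact (hint.congr_fun (fun x hx => (hcong x hx).symm) measurableSet_Ioi)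
  · rw [mellin, key, integral_indicator measurableSet_Ioi,
      Measure.restrict_restrict_of_subset hsub,
      setIntegral_congr_fun measurableSet_Ioi hcong, integral_Ioi_cpow_of_lt hz2 one_pos]
    have h21 : z - 2 + 1 = z - 1 := by ring
    rw [h21]
    rw [neg_div, one_div]
    norm_num

lemma Hr_bound {a : ℝ} (ha : 0 < a) (ha1 : a ≤ 1) {x : ℝ} (hx : 0 < x) (hx1 : x ≤ 1) :
    |Real.exp ((1-a)*x) / (Real.exp x - 1) - 1/x| ≤ 2 * Real.exp 1 := by
  have hB : Real.exp (-x) * Real.exp x = 1 := by rw [← Real.exp_add]; simp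
  have hA : Real.exp ((1-a)*x) = Real.exp x * Real.exp (-a*x) := by
    rw [← Real.exp_add]; ring_nf
  have hexp1 : (1:ℝ) + x ≤ Real.exp x := by simpa [add_comm] using Real.add_one_le_exp x
  have hd2 : (0:ℝ) < Real.exp x - 1 := by linarith
  have he4 : Real.exp (-x) < 1 := Real.exp_lt_one_iff.mpr (by linarith)
  have hd4 : (0:ℝ) < 1 - Real.exp (-x) := by linarith
  set e3 := Real.exp (-a*x) with he3def
  set e4 := Real.exp (-x) with he4def
  have hid : Real.exp ((1-a)*x) / (Real.exp x - 1) - 1/x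
      = (x*e3 - (1-e4))/(x*(1-e4)) := by
    rw [hA, div_sub_div _ _ hd2.ne' hx.ne', div_eq_div_iff (by positivity) (by positivity)]
    linear_combination (-(x^2 * e3)) * hB
  -- numerator bound
  have b1a : 1 - a*x ≤ e3 := by
    rw [he3def]; linarith [Real.add_one_le_exp (-a*x)]
  have b1b : e3 ≤ 1 := Real.exp_le_one_iff.mpr (by nlinarith)
  have b2a : 1 - x ≤ e4 := by
    rw [he4def]; linarith [Real.add_one_le_exp (-x)]
  have b2b : e4 ≤ 1/(1+x) := by
    rw [he4def, Real.exp_neg]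
    rw [div_eq_inv_mul, mul_one]
    exact inv_anti₀ (by linarith) hexp1
  have hnum : |x*e3 - (1-e4)| ≤ 2*x^2 := by
    rw [abs_le]
    constructor
    · nlinarith
    · nlinarith [sq_nonneg x, mul_pos hx hx]
  -- denominator bound
  have he4e : Real.exp (-1) ≤ e4 := Real.exp_le_exp.mpr (by linarith)
  have hxe : x * e4 ≤ 1 - e4 := by nlinarith [hB]
  have hden : x^2 * Real.exp (-1) ≤ x*(1-e4) := by nlinarith
  have hdpos : (0:ℝ) < x*(1-e4) := by positivity
  rw [hid, abs_div, abs_of_pos hdpos]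
  have h1 : |x * e3 - (1 - e4)| / (x * (1 - e4)) ≤ (2*x^2) / (x^2 * Real.exp (-1)) := by
    apply div_le_div₀ (by positivity) hnum (by positivity) hden
  refine h1.trans ?_
  have hee : Real.exp 1 * Real.exp (-1) = 1 := by rw [← Real.exp_add]; simp
  rw [div_le_iff₀ (by positivity)]
  nlinarith [sq_nonneg x, Real.exp_pos (-1), Real.exp_pos 1]

lemma HC_eq_real (a : ℝ) {x : ℝ} (hx : 0 < x) :
    HC a x = ((Real.exp ((1-a)*x) / (Real.exp x - 1) - 1/x : ℝ) : ℂ) := by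
  rw [HC, fC]
  push_cast
  rw [one_div]

lemma HC_bigO_zero {a : ℝ} (ha : 0 < a) (ha1 : a ≤ 1) :
    HC a =O[nhdsWithin 0 (Ioi 0)] fun x : ℝ => x ^ (-(0:ℝ)) := by
  rw [isBigO_iff]
  refine ⟨2 * Real.exp 1, ?_⟩
  filter_upwards [Ioc_mem_nhdsGT_of_mem (by norm_num : (0:ℝ) ∈ Ico (0:ℝ) 1)] with x hx
  obtain ⟨hx0, hx1⟩ := hx
  rw [HC_eq_real a hx0, Complex.norm_real, Real.norm_eq_abs]
  have := Hr_bound ha ha1 hx0 hx1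
  simp only [neg_zero, Real.rpow_zero, norm_one, mul_one]
  exact this

lemma inv_bigO_top : (fun x : ℝ => ((x:ℂ))⁻¹) =O[atTop] fun x : ℝ => x ^ (-(1:ℝ)) := by
  rw [isBigO_iff]
  refine ⟨1, ?_⟩
  filter_upwards [eventually_gt_atTop (0:ℝ)] with x hx
  rw [norm_inv, Complex.norm_real, Real.norm_eq_abs, abs_of_pos hx, Real.norm_eq_abs,
    Real.rpow_neg_one, abs_of_pos (by positivity : (0:ℝ) < x⁻¹), one_mul]

lemma HC_bigO_top {a : ℝ} (ha : 0 < a) :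
    HC a =O[atTop] fun x : ℝ => x ^ (-(1:ℝ)) := by
  have h1 : fC a =O[atTop] fun x : ℝ => x ^ (-(1:ℝ)) :=
    (fC_bigO_top ha).trans (isLittleO_exp_neg_mul_rpow_atTop ha _).isBigO
  exact h1.sub inv_bigO_top

lemma mellinConv_HC {a : ℝ} (ha : 0 < a) (ha1 : a ≤ 1) {z : ℂ}
    (hz0 : 0 < z.re) (hz1 : z.re < 1) : MellinConvergent (HC a) z :=
  mellinConvergent_of_isBigO_rpow (locInt_HC a) (HC_bigO_top ha) hz1 (HC_bigO_zero ha ha1) hz0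

lemma W_eventuallyEq_top (a : ℝ) : fC a =ᶠ[atTop] Wfun a := by
  filter_upwards [eventually_gt_atTop (1:ℝ)] with x hx
  rw [Wfun, Pfun, indicator_of_notMem (fun h => absurd h.2 (not_le.mpr hx)), sub_zero]

lemma W_bigO_top {a : ℝ} (ha : 0 < a) :
    Wfun a =O[atTop] fun x : ℝ => Real.exp (-a * x) :=
  ((fC_bigO_top ha).congr' (W_eventuallyEq_top a) EventuallyEq.rfl)

lemma W_eventuallyEq_zero (a : ℝ) : HC a =ᶠ[nhdsWithin 0 (Ioi 0)] Wfun a := by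
  filter_upwards [Ioc_mem_nhdsGT_of_mem (by norm_num : (0:ℝ) ∈ Ico (0:ℝ) 1)] with x hx
  rw [Wfun, Pfun, indicator_of_mem hx, HC, cpow_neg_one]

lemma W_bigO_zero {a : ℝ} (ha : 0 < a) (ha1 : a ≤ 1) :
    Wfun a =O[nhdsWithin 0 (Ioi 0)] fun x : ℝ => x ^ (-(0:ℝ)) :=
  (HC_bigO_zero ha ha1).congr' (W_eventuallyEq_zero a) EventuallyEq.rfl

lemma K_diff {a : ℝ} (ha : 0 < a) (ha1 : a ≤ 1) {z : ℂ} (hz : 0 < z.re) :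
    DifferentiableAt ℂ (mellin (Wfun a)) z :=
  mellin_differentiableAt_of_isBigO_rpow_exp ha (locInt_W a) (W_bigO_top ha)
    (W_bigO_zero ha ha1) hz

def Aset : Set ℂ := {z | 0 < z.re ∧ 0 < z.im}
def Cset : Set ℂ := {z | 0 < z.re ∧ z.re < 1}
def Dset : Set ℂ := {z | 1 < z.re}
def Uset : Set ℂ := (Aset ∪ Cset) ∪ Dset

lemma Uset_open : IsOpen Uset := by
  refine IsOpen.union (IsOpen.union ?_ ?_) ?_
  · exact (isOpen_lt continuous_const Complex.continuous_re).inter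
      (isOpen_lt continuous_const Complex.continuous_im)
  · exact (isOpen_lt continuous_const Complex.continuous_re).inter
      (isOpen_lt Complex.continuous_re continuous_const)
  · exact isOpen_lt continuous_const Complex.continuous_re

lemma Uset_preconnected : IsPreconnected Uset := by
  have hA : IsPreconnected Aset :=
    ((convex_halfSpace_re_gt 0).inter (convex_halfSpace_im_gt 0)).isPreconnected
  have hC : IsPreconnected Cset :=
    ((convex_halfSpace_re_gt 0).inter (convex_halfSpace_re_lt 1)).isPreconnected
  have hD : IsPreconnected Dset := (convex_halfSpace_re_gt 1).isPreconnected
  have hAC : IsPreconnected (Aset ∪ Cset) := by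
    apply IsPreconnected.union (⟨1/2, 1/2⟩ : ℂ) ?_ ?_ hA hC
    · exact ⟨by norm_num, by norm_num⟩
    · exact ⟨by norm_num, by norm_num⟩
  apply IsPreconnected.union (⟨2, 1⟩ : ℂ) ?_ ?_ hAC hD
  · exact Or.inl ⟨by norm_num, by norm_num⟩
  · show (1:ℝ) < (⟨2,1⟩ : ℂ).re
    norm_num

lemma Uset_re_pos {z : ℂ} (hz : z ∈ Uset) : 0 < z.re := by
  rcases hz with (h | h) | h
  · exact h.1
  · exact h.1
  · have : (1:ℝ) < z.re := h
    linarith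

lemma Uset_ne_one {z : ℂ} (hz : z ∈ Uset) : z ≠ 1 := by
  rcases hz with (h | h) | h
  · intro he
    have := h.2
    rw [he] at this
    simp at this
  · intro he
    have := h.2
    rw [he] at this
    simp at this
  · intro he
    have : (1:ℝ) < z.re := h
    rw [he] at this
    simp at this

lemma eqOn_U {a : ℝ} (ha : 0 < a) (ha1 : a ≤ 1) :
    EqOn (mellin (Wfun a))
      (fun z => Complex.Gamma z * HurwitzZeta.hurwitzZeta (a : UnitAddCircle) z - 1/(z-1))
      Uset := by
  have hfd : DifferentiableOn ℂ (mellin (Wfun a)) Uset :=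
    fun z hz => (K_diff ha ha1 (Uset_re_pos hz)).differentiableWithinAt
  have hgd : DifferentiableOn ℂ
      (fun z => Complex.Gamma z * HurwitzZeta.hurwitzZeta (a : UnitAddCircle) z - 1/(z-1))
      Uset := by
    intro z hz
    have hne : z ≠ 1 := Uset_ne_one hz
    have hre : 0 < z.re := Uset_re_pos hz
    have hG : DifferentiableAt ℂ Complex.Gamma z := by
      apply Complex.differentiableAt_Gamma
      intro m hm
      rw [hm] at hre
      simp only [Complex.neg_re, Complex.natCast_re] at hre
      have : (0:ℝ) ≤ m := Nat.cast_nonneg m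
      linarith
    have hZ : DifferentiableAt ℂ (HurwitzZeta.hurwitzZeta (a : UnitAddCircle)) z :=
      HurwitzZeta.differentiableAt_hurwitzZeta _ hne
    apply DifferentiableAt.differentiableWithinAt
    apply (hG.mul hZ).sub
    apply DifferentiableAt.div (differentiableAt_const _)
      ((differentiableAt_id.sub (differentiableAt_const _)))
    exact sub_ne_zero.mpr hne
  have h2U : (2:ℂ) ∈ Uset := Or.inr (by show (1:ℝ) < (2:ℂ).re; norm_num)
  apply AnalyticOnNhd.eqOn_of_preconnected_of_eventuallyEq
    (hfd.analyticOnNhd Uset_open) (hgd.analyticOnNhd Uset_open) Uset_preconnected h2U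
  have hmem : {z : ℂ | 1 < z.re} ∈ nhds (2:ℂ) := by
    apply (isOpen_lt continuous_const Complex.continuous_re).mem_nhds
    show (1:ℝ) < (2:ℂ).re
    norm_num
  filter_upwards [hmem] with z hz
  have hz' : 1 < z.re := hz
  have h := hasMellin_sub (mellinConv_fC ha hz') (hasMellin_P hz').1
  have heq : mellin (Wfun a) z = mellin (fC a) z - mellin Pfun z := h.2
  rw [heq, mellin_fC ha ha1 hz', (hasMellin_P hz').2]

/-- For real 0 < s < 1 and 0 < a ≤ 1,
Γ(s)·ζ(s,a) = ∫_0^∞ H(a,x) x^{s-1} dx with H(a,x) = e^{(1-a)x}/(e^x−1) − 1/x,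
where ζ(·,a) is the analytically continued Hurwitz zeta function. -/
theorem gamma_mul_hurwitzZeta_eq_integral (s a : ℝ) (hs0 : 0 < s) (hs1 : s < 1)
    (ha : 0 < a) (ha1 : a ≤ 1) :
    (Real.Gamma s : ℂ) * HurwitzZeta.hurwitzZeta (a : UnitAddCircle) (s : ℂ)
      = ((∫ x in Ioi (0 : ℝ),
          (Real.exp ((1 - a) * x) / (Real.exp x - 1) - 1 / x) * x ^ (s - 1)) : ℝ) := by
  have hz0 : 0 < (s:ℂ).re := by simpa using hs0
  have hz1 : (s:ℂ).re < 1 := by simpa using hs1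
  have hsU : (s:ℂ) ∈ Uset := Or.inl (Or.inr ⟨hz0, hz1⟩)
  have h1 := eqOn_U ha ha1 hsU
  have hW : mellin (Wfun a) (s:ℂ) = mellin (fun x => HC a x + Qfun x) (s:ℂ) := by
    rw [mellin, mellin]
    apply setIntegral_congr_fun measurableSet_Ioi
    intro x hx
    have hx0 : (0:ℝ) < x := hx
    by_cases hle : x ≤ 1
    · simp only [Wfun, Pfun, HC, Qfun]
      rw [indicator_of_mem (mem_Ioc.mpr ⟨hx0, hle⟩),
        indicator_of_notMem (by simpa using hle : x ∉ Ioi (1:ℝ)), cpow_neg_one, add_zero]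
    · simp only [Wfun, Pfun, HC, Qfun]
      rw [indicator_of_notMem (fun h => hle (mem_Ioc.mp h).2),
        indicator_of_mem (by simpa using not_le.mp hle : x ∈ Ioi (1:ℝ)), cpow_neg_one]
      ring_nf
  have h2 := (hasMellin_add (mellinConv_HC ha ha1 hz0 hz1) (hasMellin_Q hz1).1).2
  have hQ : mellin Qfun (s:ℂ) = -(1/((s:ℂ)-1)) := (hasMellin_Q hz1).2
  have h3 : mellin (HC a) (s:ℂ) = ((∫ x in Ioi (0:ℝ),
      (Real.exp ((1 - a) * x) / (Real.exp x - 1) - 1 / x) * x ^ (s - 1)) : ℝ) := by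
    have e1 : Complex.ofReal (∫ x in Ioi (0:ℝ),
        (Real.exp ((1 - a) * x) / (Real.exp x - 1) - 1 / x) * x ^ (s - 1))
        = ∫ x in Ioi (0:ℝ),
          Complex.ofReal ((Real.exp ((1 - a) * x) / (Real.exp x - 1) - 1 / x) * x ^ (s - 1)) :=
      (integral_ofReal (𝕜 := ℂ)).symm
    rw [mellin, e1]
    apply setIntegral_congr_fun measurableSet_Ioi
    intro x hx
    have hx0 : (0:ℝ) < x := hx
    simp only []
    rw [HC_eq_real a hx0, smul_eq_mul, Complex.ofReal_mul, Complex.ofReal_cpow hx0.le]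
    push_cast
    ring
  rw [← Complex.Gamma_ofReal, ← h3]
  have hfin := h1.symm.trans (hW.trans h2)
  rw [hQ] at hfin
  linear_combination hfin
end

section
/- If a ≥ 1/2 (and a ≤ 1), then ζ(σ,a) < 0 for every real σ with 0 < σ < 1. -/
open Complex Set HurwitzZeta

namespace HZNeg



noncomputable def Tm (t : ℝ) (s : ℂ) : ℂ :=
  (1 - s) * (t : ℂ) ^ (-s) - ((t : ℂ) + 2⁻¹) ^ (1 - s) + ((t : ℂ) - 2⁻¹) ^ (1 - s)

lemma hasDerivAt_base (t : ℝ) (c : ℂ) (u : ℝ) (h : 0 < t + u) :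
    HasDerivAt (fun u : ℝ => ((t : ℂ) + u) ^ c) (c * ((t : ℂ) + u) ^ (c - 1)) u := by
  have h1 : HasDerivAt (fun z : ℂ => ((t : ℂ) + z) ^ c)
      (c * ((t : ℂ) + (u : ℂ)) ^ (c - 1) * 1) (u : ℂ) := by
    refine HasDerivAt.cpow_const ?_ ?_
    · simpa using (hasDerivAt_id ((u : ℝ) : ℂ)).const_add (t : ℂ)
    · left
      simpa using h
  simpa using h1.comp_ofReal

lemma norm_cpow_real {x : ℝ} (hx : 0 < x) (c : ℂ) : ‖(x : ℂ) ^ c‖ = x ^ c.re := by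
  rw [Complex.norm_cpow_eq_rpow_re_of_pos hx]

lemma norm_cpow_add (t u : ℝ) (h : 0 < t + u) (c : ℂ) :
    ‖((t : ℂ) + u) ^ c‖ = (t + u) ^ c.re := by
  rw [show ((t : ℂ) + u) = ((t + u : ℝ) : ℂ) by push_cast; ring, norm_cpow_real h]

lemma Tm_norm_le {t : ℝ} (ht : 1 ≤ t - 2⁻¹) {s : ℂ} (hs : 0 < s.re) :
    ‖Tm t s‖ ≤ ‖s‖ * ‖1 - s‖ * (t - 2⁻¹) ^ (-s.re - 1) := by
  have ht0 : (0:ℝ) < t - 2⁻¹ := lt_of_lt_of_le one_pos ht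
  set M : ℝ := (t - 2⁻¹) ^ (-s.re - 1) with hM
  have hMpos : 0 < M := Real.rpow_pos_of_pos ht0 _
  set I : Set ℝ := Icc (-(2⁻¹:ℝ)) 2⁻¹ with hI
  have hpos : ∀ u ∈ I, 0 < t + u := by
    intro u hu
    have := hu.1
    simp only [hI, mem_Icc] at hu
    linarith [hu.1]
  set f₂ : ℝ → ℂ := fun u => (1 - s) * ((t : ℂ) + u) ^ (-s) with hf₂
  -- inner MVT bound
  have hder₂ : ∀ u ∈ I, HasDerivWithinAt f₂ ((1 - s) * (-s * ((t : ℂ) + u) ^ (-s - 1))) I u := by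
    intro u hu
    exact (((hasDerivAt_base t (-s) u (hpos u hu)).const_mul (1 - s)).congr_deriv
      (by ring)).hasDerivWithinAt
  have hbound₂ : ∀ u ∈ I, ‖(1 - s) * (-s * ((t : ℂ) + u) ^ (-s - 1))‖ ≤ ‖1 - s‖ * ‖s‖ * M := by
    intro u hu
    rw [norm_mul, norm_mul, norm_neg, norm_cpow_add t u (hpos u hu)]
    have h1 : (t + u) ^ ((-s - 1).re) ≤ M := by
      rw [hM, show ((-s - 1).re) = -s.re - 1 by simp]
      refine Real.rpow_le_rpow_of_nonpos ht0 ?_ (by linarith)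
      simp only [hI, mem_Icc] at hu
      linarith [hu.1]
    have := mul_le_mul_of_nonneg_left h1 (norm_nonneg s)
    nlinarith [norm_nonneg (1 - s), norm_nonneg s, mul_le_mul_of_nonneg_left this (norm_nonneg (1-s))]
  have hmvt₂ : ∀ u ∈ I, ‖f₂ u - f₂ 0‖ ≤ ‖1 - s‖ * ‖s‖ * M * 2⁻¹ := by
    intro u hu
    have h0 : (0:ℝ) ∈ I := by simp [hI]
    have := (convex_Icc _ _).norm_image_sub_le_of_norm_hasDerivWithin_le hder₂ hbound₂ h0 hu
    calc ‖f₂ u - f₂ 0‖ ≤ (‖1 - s‖ * ‖s‖ * M) * ‖u - 0‖ := this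
      _ ≤ (‖1 - s‖ * ‖s‖ * M) * 2⁻¹ := by
          refine mul_le_mul_of_nonneg_left ?_ (by positivity)
          simp only [hI, mem_Icc] at hu
          rw [sub_zero, Real.norm_eq_abs, abs_le]
          constructor <;> linarith [hu.1, hu.2]
  -- outer MVT
  set χ : ℝ → ℂ := fun u => ((t : ℂ) + u) ^ (1 - s) - (u : ℂ) * f₂ 0 with hχ
  have hderχ : ∀ u ∈ I, HasDerivWithinAt χ (f₂ u - f₂ 0) I u := by
    intro u hu
    have h1 : HasDerivAt (fun u : ℝ => ((t : ℂ) + u) ^ (1 - s))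
        ((1 - s) * ((t : ℂ) + u) ^ (-s)) u := by
      have := hasDerivAt_base t (1 - s) u (hpos u hu)
      simpa [show (1 : ℂ) - s - 1 = -s by ring] using this
    have h2 : HasDerivAt (fun u : ℝ => (u : ℂ) * f₂ 0) (f₂ 0) u := by
      simpa using ((hasDerivAt_id ((u:ℝ) : ℂ)).mul_const (f₂ 0)).comp_ofReal
    exact ((h1.sub h2).congr_deriv (by rw [hf₂])).hasDerivWithinAt
  have hmvtχ := (convex_Icc _ _).norm_image_sub_le_of_norm_hasDerivWithin_le hderχ
      (fun u hu => hmvt₂ u hu) (by simp [hI] : (-(2⁻¹:ℝ)) ∈ I)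
      (by simp [hI] : (2⁻¹:ℝ) ∈ I)
  have hkey : Tm t s = -(χ 2⁻¹ - χ (-2⁻¹)) := by
    rw [hχ, hf₂, Tm]
    push_cast
    ring_nf
  rw [hkey, norm_neg]
  calc ‖χ 2⁻¹ - χ (-2⁻¹)‖ ≤ (‖1 - s‖ * ‖s‖ * M * 2⁻¹) * ‖(2⁻¹:ℝ) - (-2⁻¹)‖ := hmvtχ
    _ ≤ ‖s‖ * ‖1 - s‖ * M := by
        rw [show ((2⁻¹:ℝ) - (-2⁻¹)) = 1 by norm_num, norm_one, mul_one]
        nlinarith [norm_nonneg s, norm_nonneg (1 - s), hMpos.le,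
          mul_nonneg (mul_nonneg (norm_nonneg (1-s)) (norm_nonneg s)) hMpos.le]







lemma summable_aux {ε : ℝ} (hε : 0 < ε) : Summable (fun n : ℕ => ((n : ℝ) + 1) ^ (-1 - ε)) := by
  have h1 : Summable (fun n : ℕ => (n : ℝ) ^ (-1 - ε)) :=
    Real.summable_nat_rpow.2 (by linarith)
  have := (summable_nat_add_iff 1).2 h1
  refine this.congr fun n => ?_
  push_cast
  ring_nf

lemma norm_Tm_le' {a : ℝ} (ha : 1 / 2 ≤ a) {s : ℂ} {ε R : ℝ} (hε : 0 < ε)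
    (hεs : ε ≤ s.re) (hR : ‖s‖ ≤ R) (n : ℕ) :
    ‖Tm ((n : ℝ) + 1 + a) s‖ ≤ R * (1 + R) * ((n : ℝ) + 1) ^ (-1 - ε) := by
  have hn1 : (1:ℝ) ≤ (n : ℝ) + 1 := by
    have : (0:ℝ) ≤ (n:ℝ) := Nat.cast_nonneg n
    linarith
  have hnt : ((n : ℝ) + 1) ≤ ((n : ℝ) + 1 + a) - 2⁻¹ := by linarith
  have ht : (1:ℝ) ≤ ((n : ℝ) + 1 + a) - 2⁻¹ := le_trans hn1 hnt
  have hs : 0 < s.re := lt_of_lt_of_le hε hεs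
  refine (Tm_norm_le ht hs).trans ?_
  have h1 : (((n : ℝ) + 1 + a) - 2⁻¹) ^ (-s.re - 1) ≤ ((n : ℝ) + 1) ^ (-s.re - 1) :=
    Real.rpow_le_rpow_of_nonpos (by linarith) hnt (by linarith)
  have h2 : ((n : ℝ) + 1) ^ (-s.re - 1) ≤ ((n : ℝ) + 1) ^ (-1 - ε) :=
    Real.rpow_le_rpow_of_exponent_le hn1 (by linarith)
  have h3 : ‖1 - s‖ ≤ 1 + R := by
    calc ‖1 - s‖ ≤ ‖(1:ℂ)‖ + ‖s‖ := norm_sub_le _ _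
      _ ≤ 1 + R := by rw [norm_one]; linarith
  have hb : (0:ℝ) ≤ ((n : ℝ) + 1) ^ (-1 - ε) := Real.rpow_nonneg (by positivity) _
  have hRnn : 0 ≤ R := le_trans (norm_nonneg s) hR
  calc ‖s‖ * ‖1 - s‖ * (((n : ℝ) + 1 + a) - 2⁻¹) ^ (-s.re - 1)
      ≤ R * (1 + R) * (((n : ℝ) + 1 + a) - 2⁻¹) ^ (-s.re - 1) := by
        have hx : (0:ℝ) ≤ (((n : ℝ) + 1 + a) - 2⁻¹) ^ (-s.re - 1) :=
          Real.rpow_nonneg (by linarith) _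
        exact mul_le_mul_of_nonneg_right
          (mul_le_mul hR h3 (norm_nonneg (1 - s)) hRnn) hx
    _ ≤ R * (1 + R) * ((n : ℝ) + 1) ^ (-1 - ε) := by
        refine mul_le_mul_of_nonneg_left (h1.trans h2) ?_
        have : (0:ℝ) ≤ 1 + R := by linarith
        positivity

lemma summable_Tm {a : ℝ} (ha : 1 / 2 ≤ a) {s : ℂ} (hs : 0 < s.re) :
    Summable (fun n : ℕ => Tm ((n : ℝ) + 1 + a) s) := by
  refine Summable.of_norm_bounded (((summable_aux hs).mul_left (‖s‖ * (1 + ‖s‖)))) ?_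
  exact fun n => norm_Tm_le' ha hs le_rfl le_rfl n

noncomputable def gfun (a : ℝ) (s : ℂ) : ℂ :=
  (1 - s) * (a : ℂ) ^ (-s) - ((a : ℂ) + 2⁻¹) ^ (1 - s) + ∑' n : ℕ, Tm ((n : ℝ) + 1 + a) s

lemma diff_Tm {t : ℝ} (ht : 1 / 2 < t) : Differentiable ℂ (Tm t) := by
  have h0 : (t : ℂ) ≠ 0 := Complex.ofReal_ne_zero.2 (by linarith)
  have h1 : (t : ℂ) + 2⁻¹ ≠ 0 := by
    rw [show ((t : ℂ) + 2⁻¹) = ((t + 2⁻¹ : ℝ) : ℂ) by push_cast; ring]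
    exact Complex.ofReal_ne_zero.2 (by norm_num; linarith)
  have h2 : (t : ℂ) - 2⁻¹ ≠ 0 := by
    rw [show ((t : ℂ) - 2⁻¹) = ((t - 2⁻¹ : ℝ) : ℂ) by push_cast; ring]
    exact Complex.ofReal_ne_zero.2 (by intro h; rw [sub_eq_zero] at h; norm_num at h; linarith)
  refine Differentiable.add (Differentiable.sub ?_ ?_) ?_
  · exact (differentiable_id.const_sub 1).mul
      (differentiable_neg.const_cpow (Or.inl h0))
  · exact (differentiable_id.const_sub 1).const_cpow (Or.inl h1)
  · exact (differentiable_id.const_sub 1).const_cpow (Or.inl h2)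

lemma half_lt_t {a : ℝ} (ha : 1 / 2 ≤ a) (n : ℕ) : 1 / 2 < (n : ℝ) + 1 + a := by
  have : (0:ℝ) ≤ (n:ℝ) := Nat.cast_nonneg n
  linarith

lemma gdiff {a : ℝ} (ha : 1 / 2 ≤ a) :
    DifferentiableOn ℂ (gfun a) {s : ℂ | 0 < s.re} := by
  have hhead : Differentiable ℂ (fun s : ℂ =>
      (1 - s) * (a : ℂ) ^ (-s) - ((a : ℂ) + 2⁻¹) ^ (1 - s)) := by
    have h0 : (a : ℂ) ≠ 0 := Complex.ofReal_ne_zero.2 (by linarith)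
    have h1 : (a : ℂ) + 2⁻¹ ≠ 0 := by
      rw [show ((a : ℂ) + 2⁻¹) = ((a + 2⁻¹ : ℝ) : ℂ) by push_cast; ring]
      exact Complex.ofReal_ne_zero.2 (by norm_num; linarith)
    exact ((differentiable_id.const_sub 1).mul
      (differentiable_neg.const_cpow (Or.inl h0))).sub
      ((differentiable_id.const_sub 1).const_cpow (Or.inl h1))
  intro s₀ hs₀
  simp only [mem_setOf_eq] at hs₀
  set ε : ℝ := s₀.re / 2 with hε
  have hεpos : 0 < ε := by positivity
  set R : ℝ := ‖s₀‖ + ε with hR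
  have hball : Metric.ball s₀ ε ⊆ {s : ℂ | 0 < s.re} := by
    intro s hsb
    simp only [Metric.mem_ball, Complex.dist_eq] at hsb
    have : |(s - s₀).re| ≤ ‖s - s₀‖ := Complex.abs_re_le_norm _
    simp only [mem_setOf_eq]
    have h2 : |s.re - s₀.re| < ε := lt_of_le_of_lt (by simpa using this) hsb
    have := abs_lt.mp h2
    linarith [this.1]
  have hdsum : DifferentiableOn ℂ (fun s => ∑' n : ℕ, Tm ((n : ℝ) + 1 + a) s)
      (Metric.ball s₀ ε) := by
    refine differentiableOn_tsum_of_summable_norm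
      ((summable_aux hεpos).mul_left (R * (1 + R)))
      (fun n => ((diff_Tm (half_lt_t ha n)).differentiableOn)) Metric.isOpen_ball ?_
    intro n w hw
    simp only [Metric.mem_ball, Complex.dist_eq] at hw
    have hre : ε ≤ w.re := by
      have : |(w - s₀).re| ≤ ‖w - s₀‖ := Complex.abs_re_le_norm _
      have h2 : |w.re - s₀.re| < ε := lt_of_le_of_lt (by simpa using this) hw
      have := abs_lt.mp h2
      simp only [hε] at *
      linarith [this.1]
    have hnw : ‖w‖ ≤ R := by
      calc ‖w‖ = ‖s₀ + (w - s₀)‖ := by ring_nf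
        _ ≤ ‖s₀‖ + ‖w - s₀‖ := norm_add_le _ _
        _ ≤ R := by
            rw [hR]
            have : ‖w - s₀‖ ≤ ε := le_of_lt hw
            linarith
    exact norm_Tm_le' ha hεpos hre hnw n
  have hda : DifferentiableAt ℂ (gfun a) s₀ := by
    have := (hhead.differentiableAt).add
      ((hdsum.differentiableAt (Metric.isOpen_ball.mem_nhds (Metric.mem_ball_self hεpos))))
    exact this
  exact hda.differentiableWithinAt









lemma geq {a : ℝ} (ha : 1 / 2 ≤ a) (ha1 : a ≤ 1) {s : ℂ} (hs : 1 < s.re) :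
    gfun a s = (1 - s) * hurwitzZeta (a : UnitAddCircle) s := by
  have hs0 : 0 < s.re := by linarith
  -- the Dirichlet series
  have hsum0 : HasSum (fun n : ℕ => ((n : ℂ) + a) ^ (-s)) (hurwitzZeta (a : UnitAddCircle) s) := by
    refine (hasSum_hurwitzZeta_of_one_lt_re ⟨by linarith, ha1⟩ hs).congr_fun fun n => ?_
    rw [cpow_neg, one_div]
  -- shifted series
  have hsum1 : Summable (fun n : ℕ => (((n : ℝ) + 1 + a : ℝ) : ℂ) ^ (-s)) := by
    have := (summable_nat_add_iff 1).2 hsum0.summable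
    refine this.congr fun n => ?_
    push_cast
    ring_nf
  -- telescoping sequence
  set f : ℕ → ℂ := fun n => (((n : ℝ) + a + 2⁻¹ : ℝ) : ℂ) ^ (1 - s) with hf
  have hdq : ∀ n : ℕ, f (n + 1) - f n
      = (1 - s) * (((n : ℝ) + 1 + a : ℝ) : ℂ) ^ (-s) - Tm ((n : ℝ) + 1 + a) s := by
    intro n
    simp only [hf, Tm]
    push_cast
    ring_nf
  have hTm := summable_Tm ha hs0
  have hd : Summable (fun n : ℕ => f (n + 1) - f n) := by
    refine Summable.congr ((hsum1.mul_left (1 - s)).sub hTm) fun n => (hdq n).symm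
  -- partial sums of telescoping series tend to -(f 0)
  have hten : Filter.Tendsto (fun N : ℕ => f N) Filter.atTop (nhds 0) := by
    have hnorm : ∀ N : ℕ, ‖f N‖ = ((N : ℝ) + a + 2⁻¹) ^ (1 - s.re) := by
      intro N
      rw [hf]
      rw [Complex.norm_cpow_eq_rpow_re_of_pos (by positivity)]
      norm_num
    rw [tendsto_zero_iff_norm_tendsto_zero]
    simp only [hnorm]
    have h1 : Filter.Tendsto (fun N : ℕ => ((N : ℝ) + a + 2⁻¹)) Filter.atTop Filter.atTop := by
      have := Filter.tendsto_atTop_add_const_right Filter.atTop (a + 2⁻¹)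
        (tendsto_natCast_atTop_atTop (R := ℝ))
      refine this.congr fun N => by ring
    have h2 : Filter.Tendsto (fun x : ℝ => x ^ (-(s.re - 1))) Filter.atTop (nhds 0) :=
      tendsto_rpow_neg_atTop (by linarith)
    have := h2.comp h1
    refine this.congr fun N => ?_
    norm_num
  have htsum_d : (∑' n : ℕ, (f (n + 1) - f n)) = -(f 0) := by
    have h1 := hd.hasSum.tendsto_sum_nat
    have h2 : ∀ N : ℕ, (∑ n ∈ Finset.range N, (f (n + 1) - f n)) = f N - f 0 :=
      fun N => Finset.sum_range_sub f N
    have h3 : Filter.Tendsto (fun N : ℕ => f N - f 0) Filter.atTop (nhds (0 - f 0)) :=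
      hten.sub tendsto_const_nhds
    have h4 : Filter.Tendsto (fun N : ℕ => ∑ n ∈ Finset.range N, (f (n + 1) - f n))
        Filter.atTop (nhds (0 - f 0)) := by
      refine h3.congr fun N => (h2 N).symm
    have := tendsto_nhds_unique h1 h4
    rw [this]; ring
  -- tsum of Tm
  have htsum_Tm : (∑' n : ℕ, Tm ((n : ℝ) + 1 + a) s)
      = (1 - s) * (∑' n : ℕ, (((n : ℝ) + 1 + a : ℝ) : ℂ) ^ (-s)) + f 0 := by
    have h5 : (fun n : ℕ => Tm ((n : ℝ) + 1 + a) s)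
        = fun k : ℕ => (1 - s) * (((k : ℝ) + 1 + a : ℝ) : ℂ) ^ (-s) - (f (k + 1) - f k) := by
      funext k; rw [hdq k]; ring
    rw [h5, Summable.tsum_sub (hsum1.mul_left _) hd, tsum_mul_left, htsum_d]
    ring
  -- split off n = 0 from Dirichlet series
  have hz : hurwitzZeta (a : UnitAddCircle) s
      = (a : ℂ) ^ (-s) + ∑' n : ℕ, (((n : ℝ) + 1 + a : ℝ) : ℂ) ^ (-s) := by
    rw [← hsum0.tsum_eq, Summable.tsum_eq_zero_add hsum0.summable]
    congr 1
    · norm_num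
    · refine tsum_congr fun n => ?_
      push_cast
      ring_nf
  have hf0 : ((a : ℂ) + 2⁻¹) ^ (1 - s) = f 0 := by
    rw [hf]
    norm_num
  rw [gfun, htsum_Tm, hz, hf0]
  ring









lemma Uconn : IsPreconnected ({s : ℂ | 0 < s.re} \ {1}) := by
  set A := {s : ℂ | 0 < s.re} ∩ {s : ℂ | 0 < s.im} with hA
  set B := {s : ℂ | 0 < s.re} ∩ {s : ℂ | s.im < 0} with hB
  set C := {s : ℂ | 0 < s.re} ∩ {s : ℂ | s.re < 1} with hC
  set D := {s : ℂ | 1 < s.re} with hD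
  have hAc : Convex ℝ A := (convex_halfSpace_re_gt 0).inter (convex_halfSpace_im_gt 0)
  have hBc : Convex ℝ B := (convex_halfSpace_re_gt 0).inter (convex_halfSpace_im_lt 0)
  have hCc : Convex ℝ C := (convex_halfSpace_re_gt 0).inter (convex_halfSpace_re_lt 1)
  have hDc : Convex ℝ D := convex_halfSpace_re_gt 1
  have z₁ : (2⁻¹ + 2⁻¹ * Complex.I) ∈ C ∩ A := by
    constructor <;> constructor <;> simp <;> norm_num
  have z₂ : (2⁻¹ - 2⁻¹ * Complex.I) ∈ C ∩ B := by
    constructor <;> constructor <;> simp <;> norm_num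
  have z₃ : ((2 : ℂ) + Complex.I) ∈ A ∩ D := by
    refine ⟨⟨?_, ?_⟩, ?_⟩
    · show (0:ℝ) < ((2:ℂ) + Complex.I).re
      simp
    · show (0:ℝ) < ((2:ℂ) + Complex.I).im
      simp
    · show (1:ℝ) < ((2:ℂ) + Complex.I).re
      simp
  have h1 : IsPreconnected (C ∪ A) :=
    IsPreconnected.union _ z₁.1 z₁.2 hCc.isPreconnected hAc.isPreconnected
  have h2 : IsPreconnected ((C ∪ A) ∪ B) :=
    IsPreconnected.union _ (Or.inl z₂.1) z₂.2 h1 hBc.isPreconnected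
  have h3 : IsPreconnected (((C ∪ A) ∪ B) ∪ D) :=
    IsPreconnected.union _ (Or.inl (Or.inr z₃.1)) z₃.2 h2 hDc.isPreconnected
  have heq : ({s : ℂ | 0 < s.re} \ {1}) = ((C ∪ A) ∪ B) ∪ D := by
    ext s
    simp only [mem_diff, mem_setOf_eq, mem_singleton_iff, mem_union, mem_inter_iff, hA, hB, hC, hD]
    constructor
    · rintro ⟨h0, hne⟩
      rcases lt_trichotomy s.im 0 with him | him | him
      · exact Or.inl (Or.inr ⟨h0, him⟩)
      · rcases lt_trichotomy s.re 1 with hre | hre | hre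
        · exact Or.inl (Or.inl (Or.inl ⟨h0, hre⟩))
        · exfalso
          exact hne (Complex.ext (by simpa using hre) (by simpa using him))
        · exact Or.inr hre
      · exact Or.inl (Or.inl (Or.inr ⟨h0, him⟩))
    · rintro (((⟨h0, h1'⟩ | ⟨h0, h1'⟩) | ⟨h0, h1'⟩) | h0)
      · exact ⟨h0, fun h => by rw [h] at h1'; simp at h1'⟩
      · exact ⟨h0, fun h => by rw [h] at h1'; simp at h1'⟩
      · exact ⟨h0, fun h => by rw [h] at h1'; simp at h1'⟩
      · refine ⟨by linarith [show (0:ℝ) < 1 from one_pos, h0] , fun h => by rw [h] at h0; simp at h0⟩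
  rw [heq]
  exact h3

lemma main_eq {a : ℝ} (ha : 1 / 2 ≤ a) (ha1 : a ≤ 1) :
    EqOn (gfun a) (fun s => (1 - s) * hurwitzZeta (a : UnitAddCircle) s)
      ({s : ℂ | 0 < s.re} \ {1}) := by
  have hopen : IsOpen ({s : ℂ | 0 < s.re} \ {1}) :=
    (isOpen_lt continuous_const Complex.continuous_re).sdiff isClosed_singleton
  have hg : AnalyticOnNhd ℂ (gfun a) ({s : ℂ | 0 < s.re} \ {1}) :=
    ((gdiff ha).mono diff_subset).analyticOnNhd hopen
  have hh : AnalyticOnNhd ℂ (fun s => (1 - s) * hurwitzZeta (a : UnitAddCircle) s)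
      ({s : ℂ | 0 < s.re} \ {1}) := by
    refine DifferentiableOn.analyticOnNhd (fun s hs => ?_) hopen
    have hs1 : s ≠ 1 := by
      intro h
      exact hs.2 (by simpa using h)
    exact (((differentiableAt_id.const_sub 1).mul
      (differentiableAt_hurwitzZeta (a : UnitAddCircle) hs1))).differentiableWithinAt
  have h2mem : (2 : ℂ) ∈ ({s : ℂ | 0 < s.re} \ {1}) := by
    constructor
    · simp
    · simp only [mem_singleton_iff]
      norm_num
  have hfg : gfun a =ᶠ[nhds 2] (fun s => (1 - s) * hurwitzZeta (a : UnitAddCircle) s) := by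
    have hS : IsOpen {s : ℂ | 1 < s.re} := isOpen_lt continuous_const Complex.continuous_re
    have h2S : (2 : ℂ) ∈ {s : ℂ | 1 < s.re} := by
      simp only [mem_setOf_eq]
      norm_num
    filter_upwards [hS.mem_nhds h2S] with s hs
    exact geq ha ha1 hs
  exact hg.eqOn_of_preconnected_of_eventuallyEq hh Uconn h2mem hfg





lemma conv_pt {t u σ : ℝ} (ht : 0 < t) (hu : 0 ≤ u) (hut : u < t) (hσ : 0 ≤ σ) :
    2 * t ^ (-σ) ≤ (t - u) ^ (-σ) + (t + u) ^ (-σ) := by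
  set p := (t - u) ^ (-σ) with hp'
  set q := (t + u) ^ (-σ) with hq'
  have htu1 : (0:ℝ) < t - u := by linarith
  have htu2 : (0:ℝ) < t + u := by linarith
  have hp : 0 < p := Real.rpow_pos_of_pos htu1 _
  have hq : 0 < q := Real.rpow_pos_of_pos htu2 _
  have hm : 0 < t ^ (-σ) := Real.rpow_pos_of_pos ht _
  have hpq : p * q = ((t - u) * (t + u)) ^ (-σ) := by
    rw [hp', hq', ← Real.mul_rpow htu1.le htu2.le]
  have hle : (t - u) * (t + u) ≤ t ^ 2 := by nlinarith
  have h2 : (t ^ 2) ^ (-σ) ≤ ((t - u) * (t + u)) ^ (-σ) :=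
    Real.rpow_le_rpow_of_nonpos (by positivity) hle (by linarith)
  have h3 : (t ^ 2) ^ (-σ) = (t ^ (-σ)) ^ 2 := by
    rw [← Real.rpow_natCast t 2, ← Real.rpow_mul ht.le, mul_comm,
      Real.rpow_mul ht.le, Real.rpow_natCast]
  have h4 : (t ^ (-σ)) ^ 2 ≤ p * q := by rw [hpq, ← h3]; exact h2
  nlinarith [sq_nonneg (p - q), sq_nonneg (p + q - 2 * t ^ (-σ))]

lemma cont_int {c σ : ℝ} (hσ : 0 < σ) {lo hi : ℝ} (h : ∀ x ∈ uIcc lo hi, 0 < c + x) :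
    IntervalIntegrable (fun u : ℝ => (c + u) ^ (-σ)) MeasureTheory.volume lo hi := by
  apply ContinuousOn.intervalIntegrable
  refine ContinuousOn.rpow_const (continuousOn_const.add continuousOn_id) ?_
  exact fun x hx => Or.inl (ne_of_gt (h x hx))

lemma int_ge {t σ : ℝ} (ht : 1 ≤ t - 2⁻¹) (hσ0 : 0 < σ) (hσ1 : σ < 1) :
    (1 - σ) * t ^ (-σ) ≤ (t + 2⁻¹) ^ (1 - σ) - (t - 2⁻¹) ^ (1 - σ) := by
  have ht0 : (0:ℝ) < t - 2⁻¹ := by linarith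
  have ht1 : (0:ℝ) < t := by linarith
  -- the closed form of the integral
  have hint : ∫ x in (t - 2⁻¹)..(t + 2⁻¹), x ^ (-σ)
      = ((t + 2⁻¹) ^ (-σ + 1) - (t - 2⁻¹) ^ (-σ + 1)) / (-σ + 1) :=
    integral_rpow (Or.inl (by linarith))
  -- split the integral and bound below by the midpoint value
  have hi1 : IntervalIntegrable (fun x : ℝ => x ^ (-σ)) MeasureTheory.volume (t - 2⁻¹) t := by
    apply ContinuousOn.intervalIntegrable
    refine ContinuousOn.rpow_const continuousOn_id ?_
    intro x hx
    rw [uIcc_of_le (by linarith)] at hx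
    exact Or.inl (ne_of_gt (by linarith [hx.1]))
  have hi2 : IntervalIntegrable (fun x : ℝ => x ^ (-σ)) MeasureTheory.volume t (t + 2⁻¹) := by
    apply ContinuousOn.intervalIntegrable
    refine ContinuousOn.rpow_const continuousOn_id ?_
    intro x hx
    rw [uIcc_of_le (by linarith)] at hx
    exact Or.inl (ne_of_gt (by linarith [hx.1]))
  have hsplit : ∫ x in (t - 2⁻¹)..(t + 2⁻¹), x ^ (-σ)
      = (∫ x in (t - 2⁻¹)..t, x ^ (-σ)) + ∫ x in t..(t + 2⁻¹), x ^ (-σ) :=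
    (intervalIntegral.integral_add_adjacent_intervals hi1 hi2).symm
  have hrefl : (∫ x in (t - 2⁻¹)..t, x ^ (-σ)) = ∫ u in (0:ℝ)..2⁻¹, (t - u) ^ (-σ) := by
    have := intervalIntegral.integral_comp_sub_left (a := (0:ℝ)) (b := 2⁻¹)
      (fun x : ℝ => x ^ (-σ)) t
    rw [this]
    norm_num
  have htrans : (∫ x in t..(t + 2⁻¹), x ^ (-σ)) = ∫ u in (0:ℝ)..2⁻¹, (t + u) ^ (-σ) := by
    have := intervalIntegral.integral_comp_add_left (a := (0:ℝ)) (b := 2⁻¹)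
      (fun x : ℝ => x ^ (-σ)) t
    rw [this]
    norm_num
  have hj1 : IntervalIntegrable (fun u : ℝ => (t - u) ^ (-σ)) MeasureTheory.volume 0 2⁻¹ := by
    apply ContinuousOn.intervalIntegrable
    refine ContinuousOn.rpow_const (continuousOn_const.sub continuousOn_id) ?_
    intro x hx
    rw [uIcc_of_le (by norm_num)] at hx
    exact Or.inl (ne_of_gt (by linarith [hx.2]))
  have hj2 : IntervalIntegrable (fun u : ℝ => (t + u) ^ (-σ)) MeasureTheory.volume 0 2⁻¹ := by
    apply ContinuousOn.intervalIntegrable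
    refine ContinuousOn.rpow_const (continuousOn_const.add continuousOn_id) ?_
    intro x hx
    rw [uIcc_of_le (by norm_num)] at hx
    exact Or.inl (ne_of_gt (by linarith [hx.1]))
  have hmono : (∫ u in (0:ℝ)..2⁻¹, 2 * t ^ (-σ))
      ≤ ∫ u in (0:ℝ)..2⁻¹, ((t - u) ^ (-σ) + (t + u) ^ (-σ)) := by
    refine intervalIntegral.integral_mono_on (by norm_num) intervalIntegrable_const
      (hj1.add hj2) ?_
    intro u hu
    exact conv_pt ht1 hu.1 (by linarith [hu.2]) hσ0.le
  have hconst : (∫ u in (0:ℝ)..2⁻¹, 2 * t ^ (-σ)) = t ^ (-σ) := by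
    rw [intervalIntegral.integral_const]
    norm_num
    ring
  have hadd : (∫ u in (0:ℝ)..2⁻¹, ((t - u) ^ (-σ) + (t + u) ^ (-σ)))
      = (∫ u in (0:ℝ)..2⁻¹, (t - u) ^ (-σ)) + ∫ u in (0:ℝ)..2⁻¹, (t + u) ^ (-σ) :=
    intervalIntegral.integral_add hj1 hj2
  have hkey : t ^ (-σ) ≤ ∫ x in (t - 2⁻¹)..(t + 2⁻¹), x ^ (-σ) := by
    rw [hsplit, hrefl, htrans, ← hadd, ← hconst]
    exact hmono
  -- combine
  rw [hint] at hkey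
  have h1σ : (0:ℝ) < 1 - σ := by linarith
  have : (1 - σ) * t ^ (-σ) ≤ (1 - σ) * (((t + 2⁻¹) ^ (-σ + 1) - (t - 2⁻¹) ^ (-σ + 1)) / (-σ + 1)) :=
    mul_le_mul_of_nonneg_left hkey h1σ.le
  calc (1 - σ) * t ^ (-σ)
      ≤ (1 - σ) * (((t + 2⁻¹) ^ (-σ + 1) - (t - 2⁻¹) ^ (-σ + 1)) / (-σ + 1)) := this
    _ = (t + 2⁻¹) ^ (1 - σ) - (t - 2⁻¹) ^ (1 - σ) := by
        rw [show (-σ + 1) = 1 - σ by ring]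
        field_simp

lemma head_lt {a σ : ℝ} (ha : 1 / 2 ≤ a) (hσ0 : 0 < σ) (hσ1 : σ < 1) :
    (1 - σ) * a ^ (-σ) < (a + 2⁻¹) ^ (1 - σ) := by
  have ha0 : (0:ℝ) < a := by linarith
  have hb0 : (0:ℝ) < a + 2⁻¹ := by linarith
  -- a ^ (-σ) = ((a+2⁻¹)/a)^σ * (a+2⁻¹)^(-σ)
  have e1 : a ^ (-σ) = ((a + 2⁻¹) / a) ^ σ * (a + 2⁻¹) ^ (-σ) := by
    rw [Real.div_rpow hb0.le ha0.le, Real.rpow_neg hb0.le]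
    rw [Real.rpow_neg ha0.le]
    field_simp
  have e2 : (a + 2⁻¹) ^ (1 - σ) = (a + 2⁻¹) * (a + 2⁻¹) ^ (-σ) := by
    rw [show (1 - σ) = 1 + (-σ) by ring, Real.rpow_add hb0, Real.rpow_one]
  rw [e1, e2, ← mul_assoc]
  refine mul_lt_mul_of_pos_right ?_ (Real.rpow_pos_of_pos hb0 _)
  -- (1 - σ) * ((a+2⁻¹)/a)^σ < a + 2⁻¹
  have h1 : ((a + 2⁻¹) / a) ^ σ ≤ (2:ℝ) ^ σ := by
    refine Real.rpow_le_rpow (by positivity) ?_ hσ0.le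
    rw [div_le_iff₀ ha0]
    linarith
  have h2 : (2:ℝ) ^ σ < (Real.exp 1) ^ σ := by
    refine Real.rpow_lt_rpow (by norm_num) ?_ hσ0
    have := Real.exp_one_gt_d9
    linarith
  have h3 : (Real.exp 1) ^ σ = Real.exp σ := Real.exp_one_rpow σ
  have h4 : (1 - σ) * Real.exp σ ≤ 1 := by
    have h5 : 1 - σ ≤ Real.exp (-σ) := by
      have := Real.add_one_le_exp (-σ)
      linarith
    have h6 : Real.exp (-σ) * Real.exp σ = 1 := by
      rw [← Real.exp_add]; norm_num
    calc (1 - σ) * Real.exp σ ≤ Real.exp (-σ) * Real.exp σ :=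
          mul_le_mul_of_nonneg_right h5 (Real.exp_pos σ).le
      _ = 1 := h6
  have h7 : (0:ℝ) < 1 - σ := by linarith
  calc (1 - σ) * ((a + 2⁻¹) / a) ^ σ ≤ (1 - σ) * (2:ℝ) ^ σ :=
        mul_le_mul_of_nonneg_left h1 h7.le
    _ < (1 - σ) * Real.exp σ := by
        rw [← h3]; exact mul_lt_mul_of_pos_left h2 h7
    _ ≤ 1 := h4
    _ ≤ a + 2⁻¹ := by linarith

lemma Tm_real_aux {t : ℝ} (ht : 2⁻¹ < t) (σ : ℝ) :
    ((1 - (σ:ℂ)) * (t : ℂ) ^ (-(σ:ℂ)) - ((t : ℂ) + 2⁻¹) ^ (1 - (σ:ℂ))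
      + ((t : ℂ) - 2⁻¹) ^ (1 - (σ:ℂ)))
    = (((1 - σ) * t ^ (-σ) - (t + 2⁻¹) ^ (1 - σ) + (t - 2⁻¹) ^ (1 - σ) : ℝ) : ℂ) := by
  have h0 : (0:ℝ) ≤ t := by linarith
  have h1 : (0:ℝ) ≤ t + 2⁻¹ := by linarith
  have h2 : (0:ℝ) ≤ t - 2⁻¹ := by linarith
  rw [show ((t:ℂ) + 2⁻¹) = ((t + 2⁻¹ : ℝ):ℂ) by push_cast; ring,
      show ((t:ℂ) - 2⁻¹) = ((t - 2⁻¹ : ℝ):ℂ) by push_cast; ring,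
      show (-(σ:ℂ)) = ((-σ : ℝ):ℂ) by push_cast; ring,
      show ((1:ℂ) - (σ:ℂ)) = ((1 - σ : ℝ):ℂ) by push_cast; ring,
      ← Complex.ofReal_cpow h0, ← Complex.ofReal_cpow h1, ← Complex.ofReal_cpow h2]
  push_cast
  ring


end HZNeg

/-- If 1/2 ≤ a ≤ 1, then the Hurwitz zeta value ζ(σ,a) is real and
negative for every 0 < σ < 1. -/
theorem hurwitzZeta_neg (a σ : ℝ) (ha : 1 / 2 ≤ a) (ha1 : a ≤ 1)
    (hσ0 : 0 < σ) (hσ1 : σ < 1) :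
    ∃ r : ℝ, r < 0 ∧ HurwitzZeta.hurwitzZeta (a : UnitAddCircle) (σ : ℂ) = (r : ℂ) := by
  have hmem : (σ:ℂ) ∈ ({s : ℂ | 0 < s.re} \ {1}) := by
    constructor
    · simp [hσ0]
    · simp only [Set.mem_singleton_iff]
      intro h
      have := congrArg Complex.re h
      simp at this
      linarith
  have heq := HZNeg.main_eq ha ha1 hmem
  simp only at heq
  set v : ℕ → ℝ := fun n => (1 - σ) * ((n:ℝ) + 1 + a) ^ (-σ)
    - (((n:ℝ) + 1 + a) + 2⁻¹) ^ (1 - σ) + (((n:ℝ) + 1 + a) - 2⁻¹) ^ (1 - σ) with hv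
  have hnn : ∀ n : ℕ, (0:ℝ) ≤ (n:ℝ) := fun n => Nat.cast_nonneg n
  have hTv : ∀ n : ℕ, HZNeg.Tm ((n:ℝ) + 1 + a) (σ:ℂ) = ((v n : ℝ) : ℂ) := by
    intro n
    rw [HZNeg.Tm, hv]
    exact HZNeg.Tm_real_aux (by have := hnn n; linarith) σ
  have hsT : Summable (fun n : ℕ => HZNeg.Tm ((n:ℝ) + 1 + a) (σ:ℂ)) :=
    HZNeg.summable_Tm ha (by simp [hσ0])
  have hsv : Summable v := by
    have h1 : Summable (fun n : ℕ => ((v n : ℝ) : ℂ)) := hsT.congr hTv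
    exact Complex.summable_ofReal.1 h1
  have htsum : (∑' n : ℕ, HZNeg.Tm ((n:ℝ) + 1 + a) (σ:ℂ)) = ((∑' n : ℕ, v n : ℝ) : ℂ) := by
    rw [tsum_congr hTv, ← Complex.ofReal_tsum]
  set rg : ℝ := (1 - σ) * a ^ (-σ) - (a + 2⁻¹) ^ (1 - σ) + ∑' n : ℕ, v n with hrg
  have hgreal : HZNeg.gfun a (σ:ℂ) = ((rg : ℝ) : ℂ) := by
    rw [HZNeg.gfun, htsum, hrg]
    have h0 : (0:ℝ) ≤ a := by linarith
    have h1 : (0:ℝ) ≤ a + 2⁻¹ := by linarith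
    rw [show (-(σ:ℂ)) = ((-σ : ℝ):ℂ) by push_cast; ring,
        show ((1:ℂ) - (σ:ℂ)) = ((1 - σ : ℝ):ℂ) by push_cast; ring,
        show ((a:ℂ) + 2⁻¹) = ((a + 2⁻¹ : ℝ):ℂ) by push_cast; ring,
        ← Complex.ofReal_cpow h0, ← Complex.ofReal_cpow h1]
    push_cast
    ring
  have hvle : ∀ n : ℕ, v n ≤ 0 := by
    intro n
    have ht : 1 ≤ ((n:ℝ) + 1 + a) - 2⁻¹ := by have := hnn n; linarith
    have := HZNeg.int_ge ht hσ0 hσ1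
    rw [hv]
    simp only
    linarith
  have htle : (∑' n : ℕ, v n) ≤ 0 := tsum_nonpos hvle
  have hrglt : rg < 0 := by
    have := HZNeg.head_lt ha hσ0 hσ1
    rw [hrg]
    linarith
  refine ⟨rg / (1 - σ), div_neg_of_neg_of_pos hrglt (by linarith), ?_⟩
  have h1σ : (1 : ℂ) - (σ:ℂ) ≠ 0 := by
    intro h
    have := congrArg Complex.re h
    simp at this
    linarith
  rw [hgreal] at heq
  have hz : HurwitzZeta.hurwitzZeta (a : UnitAddCircle) (σ:ℂ) = ((rg : ℝ):ℂ) / (1 - (σ:ℂ)) := by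
    rw [heq]
    field_simp
  rw [hz]
  push_cast
  ring
end

section
/- Let a ≥ 1/2, a ≤ 1, and 0 < σ < 1. Then for all real t, |Γ(σ + it) ζ(σ + it, a)| ≤ Γ(σ)|ζ(σ, a)|. -/
open MeasureTheory Set Filter Asymptotics Topology HurwitzZeta
open scoped Real

namespace HurwitzAux

/-- The kernel `e^{-ax}/(1-e^{-x})`. -/
noncomputable def Kf (a x : ℝ) : ℝ := Real.exp (-(a * x)) / (1 - Real.exp (-x))

/-- The regularized kernel `Kf - 1/x`. -/
noncomputable def Hf (a x : ℝ) : ℝ := Kf a x - 1 / x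

noncomputable def Kc (a : ℝ) (x : ℝ) : ℂ := (Kf a x : ℂ)
noncomputable def Hc (a : ℝ) (x : ℝ) : ℂ := (Hf a x : ℂ)

lemma Dpos {x : ℝ} (hx : 0 < x) : 0 < 1 - Real.exp (-x) := by
  have : Real.exp (-x) < Real.exp 0 := Real.exp_lt_exp.mpr (by linarith)
  rw [Real.exp_zero] at this; linarith

lemma D_ge (x : ℝ) : x * Real.exp (-x) ≤ 1 - Real.exp (-x) := by
  have h := Real.add_one_le_exp x
  have h2 : Real.exp x * Real.exp (-x) = 1 := by rw [← Real.exp_add]; simp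
  nlinarith [Real.exp_pos (-x)]

lemma D_le (x : ℝ) : 1 - Real.exp (-x) ≤ x := by
  nlinarith [Real.add_one_le_exp (-x)]

lemma key {a x : ℝ} (ha : 1 / 2 ≤ a) (hx : 0 < x) :
    x * Real.exp (-(a * x)) ≤ 1 - Real.exp (-x) := by
  have h1 : Real.exp (-(a * x)) ≤ Real.exp (-(x / 2)) :=
    Real.exp_le_exp.mpr (by nlinarith)
  have hs : x / 2 < Real.sinh (x / 2) := Real.self_lt_sinh_iff.mpr (by positivity)
  have hsinh := Real.sinh_eq (x / 2)
  have e1 : Real.exp (x / 2) * Real.exp (-(x / 2)) = 1 := by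
    rw [← Real.exp_add]; norm_num
  have e2 : Real.exp (-(x / 2)) * Real.exp (-(x / 2)) = Real.exp (-x) := by
    rw [← Real.exp_add]; ring_nf
  have h2 : x ≤ Real.exp (x / 2) - Real.exp (-(x / 2)) := by
    rw [hsinh] at hs; linarith
  nlinarith [mul_le_mul_of_nonneg_right h2 (Real.exp_pos (-(x / 2))).le,
    mul_le_mul_of_nonneg_left h1 hx.le]

lemma Kf_nonneg {a x : ℝ} (hx : 0 < x) : 0 ≤ Kf a x :=
  div_nonneg (Real.exp_pos _).le (Dpos hx).le

lemma Hf_nonpos {a x : ℝ} (ha : 1 / 2 ≤ a) (hx : 0 < x) : Hf a x ≤ 0 := by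
  rw [Hf, sub_nonpos, Kf, div_le_div_iff₀ (Dpos hx) hx, one_mul]
  nlinarith [key ha hx]

lemma Hf_abs {a x : ℝ} (ha : 1 / 2 ≤ a) (ha1 : a ≤ 1) (hx : 0 < x) :
    |Hf a x| ≤ a * Real.exp x := by
  have ha0 : 0 < a := lt_of_lt_of_le (by norm_num) ha
  have hD := Dpos hx
  rw [abs_of_nonpos (Hf_nonpos ha hx), Hf, neg_sub]
  have heq : 1 / x - Kf a x =
      ((1 - Real.exp (-x)) - x * Real.exp (-(a * x))) / (x * (1 - Real.exp (-x))) := by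
    rw [Kf]; field_simp
  rw [heq]
  have hnum : (1 - Real.exp (-x)) - x * Real.exp (-(a * x)) ≤ a * x ^ 2 := by
    have h1 : 1 - Real.exp (-x) ≤ x := D_le x
    have h2 : 1 - Real.exp (-(a * x)) ≤ a * x := by
      have := D_le (a * x); linarith
    nlinarith [Real.exp_pos (-(a * x))]
  have hden : x ^ 2 * Real.exp (-x) ≤ x * (1 - Real.exp (-x)) := by
    nlinarith [D_ge x]
  have hdpos : 0 < x ^ 2 * Real.exp (-x) := by positivity
  calc ((1 - Real.exp (-x)) - x * Real.exp (-(a * x))) / (x * (1 - Real.exp (-x)))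
      ≤ a * x ^ 2 / (x ^ 2 * Real.exp (-x)) := div_le_div₀ (by positivity) hnum hdpos hden
    _ = a * Real.exp x := by
        rw [Real.exp_neg]
        field_simp

lemma Kf_le_top {a x : ℝ} (ha : 1 / 2 ≤ a) (hx : 1 ≤ x) :
    Kf a x ≤ Real.exp (-(x / 2)) / (1 - Real.exp (-1)) := by
  have hx0 : (0 : ℝ) < x := lt_of_lt_of_le one_pos hx
  refine div_le_div₀ (Real.exp_pos _).le (Real.exp_le_exp.mpr (by nlinarith)) (Dpos one_pos) ?_
  have : Real.exp (-x) ≤ Real.exp (-1) := Real.exp_le_exp.mpr (by linarith)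
  linarith

lemma exp_third : (1 : ℝ) / 3 < Real.exp (-1) := by
  have h := Real.exp_one_lt_d9
  have h2 : Real.exp 1 * Real.exp (-1) = 1 := by rw [← Real.exp_add]; simp
  nlinarith [Real.exp_pos (-1), Real.exp_pos 1]

lemma Kf_le_bot {a x : ℝ} (ha : 1 / 2 ≤ a) (hx : 0 < x) (hx1 : x ≤ 1) :
    Kf a x ≤ 3 / x := by
  have ha0 : 0 < a := lt_of_lt_of_le (by norm_num) ha
  rw [Kf, div_le_div_iff₀ (Dpos hx) hx]
  have h1 : Real.exp (-(a * x)) ≤ 1 := Real.exp_le_one_iff.mpr (by nlinarith)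
  have h2 := D_ge x
  have h3 : Real.exp (-1) ≤ Real.exp (-x) := Real.exp_le_exp.mpr (by linarith)
  have h4 := exp_third
  nlinarith [mul_le_mul_of_nonneg_right h1 hx.le, mul_le_mul_of_nonneg_left h3 hx.le]

lemma exp_sq {x : ℝ} (hx : 0 ≤ x) : x ^ 2 / 16 ≤ Real.exp (x / 2) := by
  have h := Real.add_one_le_exp (x / 4)
  have e : Real.exp (x / 4) * Real.exp (x / 4) = Real.exp (x / 2) := by
    rw [← Real.exp_add]; ring_nf
  nlinarith [Real.exp_pos (x / 4)]

lemma contHf (a : ℝ) : ContinuousOn (Hf a) (Ioi 0) := by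
  apply ContinuousOn.sub
  · exact ContinuousOn.div (by fun_prop) (by fun_prop)
      (fun x hx => (Dpos hx).ne')
  · exact ContinuousOn.div continuousOn_const continuousOn_id
      (fun x hx => (mem_Ioi.mp hx).ne')

lemma contKf (a : ℝ) : ContinuousOn (Kf a) (Ioi 0) :=
  ContinuousOn.div (by fun_prop) (by fun_prop) (fun x hx => (Dpos hx).ne')

lemma contHc (a : ℝ) : ContinuousOn (Hc a) (Ioi 0) :=
  Complex.continuous_ofReal.comp_continuousOn (contHf a)

lemma contKc (a : ℝ) : ContinuousOn (Kc a) (Ioi 0) :=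
  Complex.continuous_ofReal.comp_continuousOn (contKf a)

lemma locIntH (a : ℝ) : LocallyIntegrableOn (Hc a) (Ioi 0) :=
  (contHc a).locallyIntegrableOn measurableSet_Ioi

lemma locIntK (a : ℝ) : LocallyIntegrableOn (Kc a) (Ioi 0) :=
  (contKc a).locallyIntegrableOn measurableSet_Ioi

/-! ### Asymptotic bounds -/

lemma normKc_le {a x : ℝ} (ha : 1 / 2 ≤ a) (hx : 1 ≤ x) :
    ‖Kc a x‖ ≤ (1 - Real.exp (-1))⁻¹ * ‖Real.exp (-(1 / 2) * x)‖ := by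
  have hx0 : (0 : ℝ) < x := lt_of_lt_of_le one_pos hx
  have h1 : ‖Kc a x‖ = Kf a x := by
    rw [Kc, Complex.norm_real, Real.norm_eq_abs, abs_of_nonneg (Kf_nonneg hx0)]
  have h2 : ‖Real.exp (-(1 / 2) * x)‖ = Real.exp (-(x / 2)) := by
    rw [Real.norm_eq_abs, Real.abs_exp]; ring_nf
  rw [h1, h2]
  have := Kf_le_top ha hx
  rw [div_eq_inv_mul] at this
  exact this

lemma normHc_le {a x : ℝ} (ha : 1 / 2 ≤ a) (ha1 : a ≤ 1) (hx : 0 < x) (hx1 : x ≤ 1) :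
    ‖Hc a x‖ ≤ 3 := by
  rw [Hc, Complex.norm_real, Real.norm_eq_abs]
  refine (Hf_abs ha ha1 hx).trans ?_
  have h1 : Real.exp x ≤ Real.exp 1 := Real.exp_le_exp.mpr hx1
  have h2 := Real.exp_one_lt_d9
  nlinarith

lemma hH_top {a : ℝ} (ha : 1 / 2 ≤ a) (ha1 : a ≤ 1) :
    (Hc a) =O[atTop] fun x : ℝ => x ^ (-1 : ℝ) := by
  set E : ℝ := 1 - Real.exp (-1) with hE
  have hEpos : 0 < E := Dpos one_pos
  apply IsBigO.of_bound (16 / E + 1)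
  filter_upwards [eventually_ge_atTop (1 : ℝ)] with x hx
  have hx0 : (0 : ℝ) < x := lt_of_lt_of_le one_pos hx
  have hnorm : ‖Hc a x‖ = |Hf a x| := by
    rw [Hc, Complex.norm_real, Real.norm_eq_abs]
  have hrn : ‖x ^ (-1 : ℝ)‖ = x⁻¹ := by
    rw [Real.norm_eq_abs, abs_of_nonneg (Real.rpow_nonneg hx0.le _),
      Real.rpow_neg_one]
  rw [hnorm, hrn]
  have hKb : Kf a x ≤ (16 / E) * x⁻¹ := by
    have h16 : (0:ℝ) < x ^ 2 / 16 := by positivity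
    have h1 : Real.exp (-(x / 2)) ≤ 16 / x ^ 2 := by
      rw [Real.exp_neg]
      calc (Real.exp (x / 2))⁻¹ ≤ (x ^ 2 / 16)⁻¹ := inv_anti₀ h16 (exp_sq hx0.le)
        _ = 16 / x ^ 2 := by rw [inv_div]
    have h2 : Kf a x ≤ (16 / x ^ 2) / E :=
      (Kf_le_top ha hx).trans (div_le_div₀ (by positivity) h1 hEpos le_rfl)
    refine h2.trans ?_
    have hx2 : E * x ≤ x ^ 2 * E := by
      nlinarith [mul_le_mul_of_nonneg_right (show x ≤ x ^ 2 by nlinarith) hEpos.le]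
    calc (16 / x ^ 2) / E = 16 / (x ^ 2 * E) := by rw [div_div]
      _ ≤ 16 / (E * x) := div_le_div_of_nonneg_left (by norm_num) (mul_pos hEpos hx0) hx2
      _ = (16 / E) * x⁻¹ := by rw [← div_div, div_eq_mul_inv]
  have habs : |Hf a x| ≤ Kf a x + 1 / x := by
    rw [abs_of_nonpos (Hf_nonpos ha hx0), Hf]
    have := Kf_nonneg (a := a) hx0
    linarith
  have h1x : (1 : ℝ) / x = 1 * x⁻¹ := by rw [one_div, one_mul]
  calc |Hf a x| ≤ Kf a x + 1 / x := habs
    _ ≤ (16 / E) * x⁻¹ + 1 * x⁻¹ := by rw [h1x] at *; linarith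
    _ = (16 / E + 1) * x⁻¹ := by ring

lemma hH_bot {a : ℝ} (ha : 1 / 2 ≤ a) (ha1 : a ≤ 1) :
    (Hc a) =O[𝓝[>] 0] fun x : ℝ => x ^ (-(0 : ℝ)) := by
  apply IsBigO.of_bound 3
  filter_upwards [Ioo_mem_nhdsGT_of_mem (Set.mem_Ico.mpr ⟨le_refl (0:ℝ), one_pos⟩)]
    with x hx
  rw [neg_zero]
  simp only [Real.rpow_zero, norm_one, mul_one]
  exact normHc_le ha ha1 hx.1 hx.2.le

lemma hK_top {a : ℝ} (ha : 1 / 2 ≤ a) :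
    (Kc a) =O[atTop] fun x : ℝ => Real.exp (-(1 / 2) * x) := by
  apply IsBigO.of_bound (1 - Real.exp (-1))⁻¹
  filter_upwards [eventually_ge_atTop (1 : ℝ)] with x hx
  exact normKc_le ha hx

lemma hK_bot {a : ℝ} (ha : 1 / 2 ≤ a) :
    (Kc a) =O[𝓝[>] 0] fun x : ℝ => x ^ (-1 : ℝ) := by
  apply IsBigO.of_bound 3
  filter_upwards [Ioo_mem_nhdsGT_of_mem (Set.mem_Ico.mpr ⟨le_refl (0:ℝ), one_pos⟩)]
    with x hx
  have hx0 : (0 : ℝ) < x := hx.1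
  have h1 : ‖Kc a x‖ = Kf a x := by
    rw [Kc, Complex.norm_real, Real.norm_eq_abs, abs_of_nonneg (Kf_nonneg hx0)]
  have hrn : ‖x ^ (-1 : ℝ)‖ = x⁻¹ := by
    rw [Real.norm_eq_abs, abs_of_nonneg (Real.rpow_nonneg hx0.le _), Real.rpow_neg_one]
  rw [h1, hrn]
  have := Kf_le_bot ha hx0 hx.2.le
  rw [div_eq_mul_inv] at this
  exact this

/-! ### The two pieces `G0`, `G1` -/

noncomputable def G0 (a : ℝ) : ℂ → ℂ := mellin (Set.indicator (Ioc 0 1) (Hc a))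

noncomputable def G1 (a : ℝ) : ℂ → ℂ := mellin (Set.indicator (Ioi 1) (Kc a))

lemma G0_eq (a : ℝ) (s : ℂ) :
    G0 a s = ∫ x in Ioc (0 : ℝ) 1, (x : ℂ) ^ (s - 1) • Hc a x := by
  rw [G0, mellin]
  have h : ∀ x : ℝ, (x : ℂ) ^ (s - 1) • (Ioc (0:ℝ) 1).indicator (Hc a) x
      = (Ioc (0:ℝ) 1).indicator (fun x : ℝ => (x : ℂ) ^ (s - 1) • Hc a x) x := by
    intro x
    by_cases h : x ∈ Ioc (0 : ℝ) 1 <;> simp [h]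
  simp_rw [h]
  rw [setIntegral_indicator measurableSet_Ioc,
    inter_eq_self_of_subset_right Ioc_subset_Ioi_self]

lemma G1_eq (a : ℝ) (s : ℂ) :
    G1 a s = ∫ x in Ioi (1 : ℝ), (x : ℂ) ^ (s - 1) • Kc a x := by
  rw [G1, mellin]
  have h : ∀ x : ℝ, (x : ℂ) ^ (s - 1) • (Ioi (1:ℝ)).indicator (Kc a) x
      = (Ioi (1:ℝ)).indicator (fun x : ℝ => (x : ℂ) ^ (s - 1) • Kc a x) x := by
    intro x
    by_cases h : x ∈ Ioi (1 : ℝ) <;> simp [h]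
  simp_rw [h]
  rw [setIntegral_indicator measurableSet_Ioi,
    inter_eq_self_of_subset_right (Ioi_subset_Ioi zero_le_one)]

lemma locIntIndH (a : ℝ) (ha : 1 / 2 ≤ a) (ha1 : a ≤ 1) :
    LocallyIntegrableOn (Set.indicator (Ioc 0 1) (Hc a)) (Ioi 0) := by
  have hint : IntegrableOn (Set.indicator (Ioc 0 1) (Hc a)) (Ioi 0) := by
    rw [IntegrableOn, integrable_indicator_iff measurableSet_Ioc, IntegrableOn,
      Measure.restrict_restrict measurableSet_Ioc,
      inter_eq_self_of_subset_left Ioc_subset_Ioi_self]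
    have hc3 : IntegrableOn (fun _ : ℝ => (3 : ℝ)) (Ioc (0:ℝ) 1) := by
      rw [integrableOn_const_iff]
      right
      rw [Real.volume_Ioc]
      exact ENNReal.ofReal_lt_top
    refine Integrable.mono' hc3
      (((contHc a).mono Ioc_subset_Ioi_self).aestronglyMeasurable measurableSet_Ioc) ?_
    rw [ae_restrict_iff' measurableSet_Ioc]
    filter_upwards with x hx
    exact normHc_le ha ha1 hx.1 hx.2
  exact fun x _ => ⟨Ioi 0, self_mem_nhdsWithin, hint⟩

lemma locIntIndK (a : ℝ) (ha : 1 / 2 ≤ a) :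
    LocallyIntegrableOn (Set.indicator (Ioi 1) (Kc a)) (Ioi 0) := by
  have hint : IntegrableOn (Set.indicator (Ioi 1) (Kc a)) (Ioi 0) := by
    rw [IntegrableOn, integrable_indicator_iff measurableSet_Ioi, IntegrableOn,
      Measure.restrict_restrict measurableSet_Ioi,
      inter_eq_self_of_subset_left (Ioi_subset_Ioi zero_le_one)]
    have hexp : IntegrableOn (fun x : ℝ => (1 - Real.exp (-1))⁻¹ * Real.exp (-(1/2) * x))
        (Ioi 1) := (exp_neg_integrableOn_Ioi 1 (by norm_num)).const_mul _
    refine hexp.mono' (((contKc a).mono (Ioi_subset_Ioi zero_le_one)).aestronglyMeasurable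
      measurableSet_Ioi) ?_
    rw [ae_restrict_iff' measurableSet_Ioi]
    filter_upwards with x hx
    have hx1 : (1 : ℝ) ≤ x := (mem_Ioi.mp hx).le
    have hx0 : (0 : ℝ) < x := lt_of_lt_of_le one_pos hx1
    rw [Kc, Complex.norm_real, Real.norm_eq_abs, abs_of_nonneg (Kf_nonneg hx0)]
    have := Kf_le_top ha hx1
    rw [div_eq_inv_mul] at this
    refine this.trans (le_of_eq ?_)
    ring_nf
  exact fun x _ => ⟨Ioi 0, self_mem_nhdsWithin, hint⟩

lemma hG0_top (a : ℝ) :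
    (Set.indicator (Ioc 0 1) (Hc a)) =O[atTop] fun x : ℝ => x ^ (-2 : ℝ) := by
  apply IsBigO.of_bound 1
  filter_upwards [eventually_gt_atTop (1 : ℝ)] with x hx
  rw [indicator_of_notMem (by simp [mem_Ioc]; intro _; linarith)]
  simp only [norm_zero, one_mul]
  positivity

lemma hG0_bot {a : ℝ} (ha : 1 / 2 ≤ a) (ha1 : a ≤ 1) :
    (Set.indicator (Ioc 0 1) (Hc a)) =O[𝓝[>] 0] fun x : ℝ => x ^ (-(0 : ℝ)) := by
  apply IsBigO.of_bound 3
  filter_upwards [Ioo_mem_nhdsGT_of_mem (Set.mem_Ico.mpr ⟨le_refl (0:ℝ), one_pos⟩)]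
    with x hx
  rw [indicator_of_mem (mem_Ioc.mpr ⟨hx.1, hx.2.le⟩), neg_zero]
  simp only [Real.rpow_zero, norm_one, mul_one]
  exact normHc_le ha ha1 hx.1 hx.2.le

lemma hG1_top {a : ℝ} (ha : 1 / 2 ≤ a) :
    (Set.indicator (Ioi 1) (Kc a)) =O[atTop] fun x : ℝ => Real.exp (-(1 / 2) * x) := by
  apply IsBigO.of_bound (1 - Real.exp (-1))⁻¹
  filter_upwards [eventually_ge_atTop (1 : ℝ)] with x hx
  by_cases h : x ∈ Ioi (1 : ℝ)
  · rw [indicator_of_mem h]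
    exact normKc_le ha hx
  · rw [indicator_of_notMem h]
    simp only [norm_zero]
    exact mul_nonneg (inv_nonneg.mpr (Dpos one_pos).le) (norm_nonneg _)

lemma hG1_bot (a : ℝ) :
    (Set.indicator (Ioi 1) (Kc a)) =O[𝓝[>] 0] fun x : ℝ => x ^ (-(0 : ℝ)) := by
  apply IsBigO.of_bound 1
  filter_upwards [Ioo_mem_nhdsGT_of_mem (Set.mem_Ico.mpr ⟨le_refl (0:ℝ), one_pos⟩)]
    with x hx
  rw [indicator_of_notMem (by simp [mem_Ioi]; linarith [hx.2])]
  simp only [norm_zero, one_mul]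
  positivity


/-! ### Pointwise algebra -/

lemma ptwise {a : ℝ} {s : ℂ} {x : ℝ} (hx : 0 < x) :
    (x : ℂ) ^ (s - 1) • Kc a x - (x : ℂ) ^ (s - 2) = (x : ℂ) ^ (s - 1) • Hc a x := by
  have hxne : (x : ℂ) ≠ 0 := Complex.ofReal_ne_zero.mpr hx.ne'
  have hxp : (x : ℂ) ^ (s - 2) = (x : ℂ) ^ (s - 1) * (x : ℂ)⁻¹ := by
    rw [show s - 2 = s - 1 + (-1) from by ring, Complex.cpow_add _ _ hxne,
      Complex.cpow_neg_one]
  simp only [smul_eq_mul, Hc, Hf, Kc, Complex.ofReal_sub, Complex.ofReal_div,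
    Complex.ofReal_one]
  rw [hxp, one_div]
  ring

/-! ### Mellin transform of `Kc` equals `Γ(s) ζ(s,a)` for `1 < re s` -/

lemma mellin_K {a : ℝ} (ha : 1 / 2 ≤ a) (ha1 : a ≤ 1) {s : ℂ} (hs : 1 < s.re) :
    mellin (Kc a) s = Complex.Gamma s * hurwitzZeta (a : UnitAddCircle) s := by
  have ha0 : 0 < a := lt_of_lt_of_le (by norm_num) ha
  have hp : ∀ n : ℕ, (fun _ : ℕ => (1 : ℂ)) n = 0 ∨ 0 < (fun n : ℕ => (n : ℝ) + a) n :=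
    fun n => Or.inr (by positivity)
  have hF : ∀ x ∈ Ioi (0 : ℝ), HasSum
      (fun n : ℕ => (fun _ : ℕ => (1 : ℂ)) n
        * (Real.exp (-((fun n : ℕ => (n : ℝ) + a) n) * x) : ℝ)) (Kc a x) := by
    intro x hx
    rw [mem_Ioi] at hx
    simp only [one_mul]
    rw [Kc]
    apply Complex.hasSum_ofReal.mpr
    have hlt : Real.exp (-x) < 1 := by
      have : Real.exp (-x) < Real.exp 0 := Real.exp_lt_exp.mpr (by linarith)
      rwa [Real.exp_zero] at this
    have hg := (hasSum_geometric_of_lt_one (Real.exp_pos (-x)).le hlt).mul_left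
      (Real.exp (-(a * x)))
    have heqf : (fun n : ℕ => Real.exp (-((n : ℝ) + a) * x))
        = fun n : ℕ => Real.exp (-(a * x)) * Real.exp (-x) ^ n := by
      funext n
      rw [← Real.exp_nat_mul, ← Real.exp_add]
      congr 1
      ring
    rw [Kf, div_eq_mul_inv, heqf]
    exact hg
  have hsum : Summable (fun n : ℕ => ‖(fun _ : ℕ => (1 : ℂ)) n‖
      / ((fun n : ℕ => (n : ℝ) + a) n) ^ s.re) := by
    have h := (Real.summable_one_div_nat_add_rpow a s.re).mpr hs
    refine h.congr fun n => ?_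
    simp only [norm_one]
    rw [abs_of_pos (by positivity : (0 : ℝ) < (n : ℝ) + a)]
  have H1 := hasSum_mellin (a := fun _ : ℕ => (1 : ℂ)) (p := fun n : ℕ => (n : ℝ) + a)
    (F := Kc a) hp (by linarith : 0 < s.re) hF hsum
  refine H1.unique ?_
  have H2 := (hasSum_hurwitzZeta_of_one_lt_re ⟨by linarith, ha1⟩ hs).mul_left
    (Complex.Gamma s)
  convert H2 using 1
  · exact rfl
  funext n
  push_cast
  ring

lemma sub_one_ne {s : ℂ} (h : s.re ≠ 1) : s - 1 ≠ 0 := by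
  intro hc
  apply h
  have := congrArg Complex.re hc
  simp only [Complex.sub_re, Complex.one_re, Complex.zero_re] at this
  linarith

/-! ### Splitting identities -/

lemma mellin_K_split {a : ℝ} (ha : 1 / 2 ≤ a) (ha1 : a ≤ 1) {s : ℂ} (hs : 1 < s.re) :
    Complex.Gamma s * hurwitzZeta (a : UnitAddCircle) s = G0 a s + G1 a s + (s - 1)⁻¹ := by
  have hne : s - 1 ≠ 0 := sub_one_ne (ne_of_gt hs)
  have hKconv : MellinConvergent (Kc a) s :=
    mellinConvergent_of_isBigO_rpow_exp one_half_pos (locIntK a) (hK_top ha) (hK_bot ha) hs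
  have hKint : IntegrableOn (fun x : ℝ => (x : ℂ) ^ (s - 1) • Kc a x) (Ioi (0 : ℝ)) := hKconv
  have hIoc : IntegrableOn (fun x : ℝ => (x : ℂ) ^ (s - 1) • Kc a x) (Ioc 0 1) :=
    hKint.mono_set Ioc_subset_Ioi_self
  have hIoi1 : IntegrableOn (fun x : ℝ => (x : ℂ) ^ (s - 1) • Kc a x) (Ioi 1) :=
    hKint.mono_set (Ioi_subset_Ioi zero_le_one)
  have hpow : IntegrableOn (fun x : ℝ => (x : ℂ) ^ (s - 2)) (Ioc 0 1) := by
    have h := intervalIntegral.intervalIntegrable_cpow' (a := 0) (b := 1) (r := s - 2)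
      (by simp only [Complex.sub_re, Complex.re_ofNat]; linarith)
    exact h.1
  have hHIoc : IntegrableOn (fun x : ℝ => (x : ℂ) ^ (s - 1) • Hc a x) (Ioc 0 1) := by
    refine IntegrableOn.congr_fun (hIoc.sub hpow) (fun x hx => ?_) measurableSet_Ioc
    simp only [Pi.sub_apply]
    exact ptwise hx.1
  have hval : ∫ x in Ioc (0 : ℝ) 1, (x : ℂ) ^ (s - 2) = (s - 1)⁻¹ := by
    rw [← intervalIntegral.integral_of_le zero_le_one,
      _root_.integral_cpow (Or.inl
        (by simp only [Complex.sub_re, Complex.re_ofNat]; linarith)),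
      show s - 2 + 1 = s - 1 from by ring]
    simp only [Complex.ofReal_one, Complex.ofReal_zero, Complex.one_cpow,
      Complex.zero_cpow hne, sub_zero, one_div]
  have hsplit : mellin (Kc a) s
      = (∫ x in Ioc (0 : ℝ) 1, (x : ℂ) ^ (s - 1) • Kc a x)
        + ∫ x in Ioi (1 : ℝ), (x : ℂ) ^ (s - 1) • Kc a x := by
    rw [mellin, ← Ioc_union_Ioi_eq_Ioi (zero_le_one (α := ℝ)),
      setIntegral_union (Ioc_disjoint_Ioi le_rfl) measurableSet_Ioi hIoc hIoi1]
  have hmid : (∫ x in Ioc (0 : ℝ) 1, (x : ℂ) ^ (s - 1) • Kc a x)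
      = G0 a s + (s - 1)⁻¹ := by
    rw [setIntegral_congr_fun measurableSet_Ioc
      (show EqOn (fun x : ℝ => (x : ℂ) ^ (s - 1) • Kc a x)
        (fun x : ℝ => (x : ℂ) ^ (s - 1) • Hc a x + (x : ℂ) ^ (s - 2)) (Ioc 0 1) from
        fun x hx => by have h := ptwise (a := a) (s := s) hx.1; linear_combination h),
      integral_add hHIoc hpow, hval, G0_eq]
  rw [← mellin_K ha ha1 hs, hsplit, hmid, G1_eq]
  ring

lemma mellin_H_split {a : ℝ} (ha : 1 / 2 ≤ a) (ha1 : a ≤ 1) {s : ℂ}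
    (hs0 : 0 < s.re) (hs1 : s.re < 1) :
    mellin (Hc a) s = G0 a s + G1 a s + (s - 1)⁻¹ := by
  have hne : s - 1 ≠ 0 := sub_one_ne (ne_of_lt hs1)
  have hHconv : MellinConvergent (Hc a) s :=
    mellinConvergent_of_isBigO_rpow (locIntH a) (hH_top ha ha1) hs1 (hH_bot ha ha1) hs0
  have hHint : IntegrableOn (fun x : ℝ => (x : ℂ) ^ (s - 1) • Hc a x) (Ioi (0 : ℝ)) := hHconv
  have hHIoc : IntegrableOn (fun x : ℝ => (x : ℂ) ^ (s - 1) • Hc a x) (Ioc 0 1) :=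
    hHint.mono_set Ioc_subset_Ioi_self
  have hH1 : IntegrableOn (fun x : ℝ => (x : ℂ) ^ (s - 1) • Hc a x) (Ioi 1) :=
    hHint.mono_set (Ioi_subset_Ioi zero_le_one)
  have hre : (s - 2).re < -1 := by
    simp only [Complex.sub_re, Complex.re_ofNat]; linarith
  have hpow : IntegrableOn (fun x : ℝ => (x : ℂ) ^ (s - 2)) (Ioi 1) :=
    integrableOn_Ioi_cpow_of_lt hre one_pos
  have hK1 : IntegrableOn (fun x : ℝ => (x : ℂ) ^ (s - 1) • Kc a x) (Ioi 1) := by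
    refine IntegrableOn.congr_fun (hH1.add hpow) (fun x hx => ?_) measurableSet_Ioi
    simp only [Pi.add_apply]
    have h := ptwise (a := a) (s := s) (lt_trans one_pos hx)
    simp only [smul_eq_mul] at h ⊢
    linear_combination -h
  have hval : ∫ x in Ioi (1 : ℝ), (x : ℂ) ^ (s - 2) = -(s - 1)⁻¹ := by
    rw [integral_Ioi_cpow_of_lt hre one_pos, show s - 2 + 1 = s - 1 from by ring]
    simp only [Complex.ofReal_one, Complex.one_cpow, neg_div, one_div]
  have hsplit : mellin (Hc a) s
      = (∫ x in Ioc (0 : ℝ) 1, (x : ℂ) ^ (s - 1) • Hc a x)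
        + ∫ x in Ioi (1 : ℝ), (x : ℂ) ^ (s - 1) • Hc a x := by
    rw [mellin, ← Ioc_union_Ioi_eq_Ioi (zero_le_one (α := ℝ)),
      setIntegral_union (Ioc_disjoint_Ioi le_rfl) measurableSet_Ioi hHIoc hH1]
  have hend : (∫ x in Ioi (1 : ℝ), (x : ℂ) ^ (s - 1) • Hc a x)
      = G1 a s - -(s - 1)⁻¹ := by
    rw [setIntegral_congr_fun measurableSet_Ioi
      (show EqOn (fun x : ℝ => (x : ℂ) ^ (s - 1) • Hc a x)
        (fun x : ℝ => (x : ℂ) ^ (s - 1) • Kc a x - (x : ℂ) ^ (s - 2)) (Ioi 1) from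
        fun x hx => (ptwise (lt_trans one_pos hx)).symm),
      integral_sub hK1 hpow, hval, G1_eq]
  rw [hsplit, hend, ← G0_eq]
  ring

/-! ### The domain of analytic continuation -/

def U : Set ℂ := {s : ℂ | 0 < s.re ∧ s.re < 2 ∧ s ≠ 1}

lemma isOpen_U : IsOpen U := by
  have h : U = (Complex.re ⁻¹' Ioo 0 2) ∩ {(1 : ℂ)}ᶜ := by
    ext s
    simp [U, mem_Ioo, and_assoc]
  rw [h]
  exact (isOpen_Ioo.preimage Complex.continuous_re).inter isOpen_compl_singleton

lemma preconn_U : IsPreconnected U := by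
  have p1 : IsPreconnected {z : ℂ | (0 < z.re ∧ z.re < 2) ∧ 0 < z.im} :=
    (((convex_halfSpace_re_gt 0).inter (convex_halfSpace_re_lt 2)).inter
      (convex_halfSpace_im_gt 0)).isPreconnected
  have p2 : IsPreconnected {z : ℂ | (0 < z.re ∧ z.re < 2) ∧ z.im < 0} :=
    (((convex_halfSpace_re_gt 0).inter (convex_halfSpace_re_lt 2)).inter
      (convex_halfSpace_im_lt 0)).isPreconnected
  have p3 : IsPreconnected {z : ℂ | 0 < z.re ∧ z.re < 1} :=
    ((convex_halfSpace_re_gt 0).inter (convex_halfSpace_re_lt 1)).isPreconnected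
  have p4 : IsPreconnected {z : ℂ | 1 < z.re ∧ z.re < 2} :=
    ((convex_halfSpace_re_gt 1).inter (convex_halfSpace_re_lt 2)).isPreconnected
  have p13 : IsPreconnected ({z : ℂ | (0 < z.re ∧ z.re < 2) ∧ 0 < z.im}
      ∪ {z : ℂ | 0 < z.re ∧ z.re < 1}) :=
    IsPreconnected.union (⟨1/2, 1/2⟩ : ℂ)
      ⟨⟨show (0:ℝ) < 1/2 by norm_num, show (1:ℝ)/2 < 2 by norm_num⟩,
        show (0:ℝ) < 1/2 by norm_num⟩
      ⟨show (0:ℝ) < 1/2 by norm_num, show (1:ℝ)/2 < 1 by norm_num⟩ p1 p3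
  have p132 : IsPreconnected ({z : ℂ | (0 < z.re ∧ z.re < 2) ∧ 0 < z.im}
      ∪ {z : ℂ | 0 < z.re ∧ z.re < 1} ∪ {z : ℂ | (0 < z.re ∧ z.re < 2) ∧ z.im < 0}) :=
    IsPreconnected.union (⟨1/2, -(1/2)⟩ : ℂ)
      (Or.inr ⟨show (0:ℝ) < 1/2 by norm_num, show (1:ℝ)/2 < 1 by norm_num⟩)
      ⟨⟨show (0:ℝ) < 1/2 by norm_num, show (1:ℝ)/2 < 2 by norm_num⟩,
        show -((1:ℝ)/2) < 0 by norm_num⟩ p13 p2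
  have p1324 : IsPreconnected ({z : ℂ | (0 < z.re ∧ z.re < 2) ∧ 0 < z.im}
      ∪ {z : ℂ | 0 < z.re ∧ z.re < 1} ∪ {z : ℂ | (0 < z.re ∧ z.re < 2) ∧ z.im < 0}
      ∪ {z : ℂ | 1 < z.re ∧ z.re < 2}) :=
    IsPreconnected.union (⟨3/2, 1/2⟩ : ℂ)
      (Or.inl (Or.inl ⟨⟨show (0:ℝ) < 3/2 by norm_num, show (3:ℝ)/2 < 2 by norm_num⟩,
        show (0:ℝ) < 1/2 by norm_num⟩))
      ⟨show (1:ℝ) < 3/2 by norm_num, show (3:ℝ)/2 < 2 by norm_num⟩ p132 p4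
  have hU : U = {z : ℂ | (0 < z.re ∧ z.re < 2) ∧ 0 < z.im}
      ∪ {z : ℂ | 0 < z.re ∧ z.re < 1} ∪ {z : ℂ | (0 < z.re ∧ z.re < 2) ∧ z.im < 0}
      ∪ {z : ℂ | 1 < z.re ∧ z.re < 2} := by
    ext z
    constructor
    · rintro ⟨h0, h2, h1⟩
      rcases lt_trichotomy z.im 0 with him | him | him
      · exact Or.inl (Or.inr ⟨⟨h0, h2⟩, him⟩)
      · have hre : z.re ≠ 1 := by
          intro h
          exact h1 (Complex.ext (by simpa using h) (by simpa using him))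
        rcases lt_or_gt_of_ne hre with h | h
        · exact Or.inl (Or.inl (Or.inr ⟨h0, h⟩))
        · exact Or.inr ⟨h, h2⟩
      · exact Or.inl (Or.inl (Or.inl ⟨⟨h0, h2⟩, him⟩))
    · rintro (((⟨⟨h0, h2⟩, him⟩ | ⟨h0, h1⟩) | ⟨⟨h0, h2⟩, him⟩) | ⟨h1, h2⟩)
      · exact ⟨h0, h2, fun h => by rw [h] at him; simp at him⟩
      · exact ⟨h0, by linarith, fun h => by rw [h] at h1; simp at h1⟩
      · exact ⟨h0, h2, fun h => by rw [h] at him; simp at him⟩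
      · exact ⟨by linarith, h2, fun h => by rw [h] at h1; simp at h1⟩
  rw [hU]
  exact p1324

lemma diffOn_U {a : ℝ} (ha : 1 / 2 ≤ a) (ha1 : a ≤ 1) :
    DifferentiableOn ℂ (fun s : ℂ => Complex.Gamma s * hurwitzZeta (a : UnitAddCircle) s
      - (G0 a s + G1 a s + (s - 1)⁻¹)) U := by
  intro s hs
  obtain ⟨h0, h2, h1⟩ := hs
  apply DifferentiableAt.differentiableWithinAt
  have hGamma : DifferentiableAt ℂ Complex.Gamma s := by
    apply Complex.differentiableAt_Gamma
    intro m h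
    rw [h] at h0
    simp only [Complex.neg_re, Complex.natCast_re] at h0
    have : (0 : ℝ) ≤ (m : ℝ) := Nat.cast_nonneg m
    linarith
  have hzeta : DifferentiableAt ℂ (hurwitzZeta (a : UnitAddCircle)) s :=
    differentiableAt_hurwitzZeta _ h1
  have hg0 : DifferentiableAt ℂ (G0 a) s :=
    mellin_differentiableAt_of_isBigO_rpow (locIntIndH a ha ha1) (hG0_top a) h2
      (hG0_bot ha ha1) h0
  have hg1 : DifferentiableAt ℂ (G1 a) s :=
    mellin_differentiableAt_of_isBigO_rpow_exp one_half_pos (locIntIndK a ha)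
      (hG1_top ha) (hG1_bot a) h0
  have hinv : DifferentiableAt ℂ (fun s : ℂ => (s - 1)⁻¹) s :=
    (differentiableAt_id.sub_const 1).inv (sub_ne_zero.mpr h1)
  exact (hGamma.mul hzeta).sub ((hg0.add hg1).add hinv)

/-! ### The key identity on the strip -/

lemma key_eq {a : ℝ} (ha : 1 / 2 ≤ a) (ha1 : a ≤ 1) {s : ℂ}
    (hs0 : 0 < s.re) (hs1 : s.re < 1) :
    mellin (Hc a) s = Complex.Gamma s * hurwitzZeta (a : UnitAddCircle) s := by
  have hdiff := (diffOn_U ha ha1).analyticOnNhd isOpen_U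
  have h32re : ((3/2 : ℝ) : ℂ).re = 3/2 := Complex.ofReal_re _
  have h32 : ((3/2 : ℝ) : ℂ) ∈ U := by
    refine ⟨by rw [h32re]; norm_num, by rw [h32re]; norm_num, ?_⟩
    intro h
    have := congrArg Complex.re h
    rw [h32re, Complex.one_re] at this
    norm_num at this
  have heq : EqOn (fun s : ℂ => Complex.Gamma s * hurwitzZeta (a : UnitAddCircle) s
      - (G0 a s + G1 a s + (s - 1)⁻¹)) 0 U := by
    apply hdiff.eqOn_zero_of_preconnected_of_eventuallyEq_zero preconn_U h32
    have hopen : IsOpen {z : ℂ | 1 < z.re ∧ z.re < 2} := by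
      have h : {z : ℂ | 1 < z.re ∧ z.re < 2} = Complex.re ⁻¹' Ioo 1 2 := rfl
      rw [h]
      exact isOpen_Ioo.preimage Complex.continuous_re
    have hmem : ((3/2 : ℝ) : ℂ) ∈ {z : ℂ | 1 < z.re ∧ z.re < 2} := by
      constructor <;> rw [h32re] <;> norm_num
    filter_upwards [hopen.mem_nhds hmem] with z hz
    simp only [Pi.zero_apply]
    rw [sub_eq_zero]
    exact mellin_K_split ha ha1 hz.1
  have hsU : s ∈ U := ⟨hs0, by linarith, by
    intro h
    rw [h] at hs1
    simp at hs1⟩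
  have h := heq hsU
  simp only [Pi.zero_apply] at h
  rw [mellin_H_split ha ha1 hs0 hs1]
  exact (sub_eq_zero.mp h).symm

end HurwitzAux


/-- Let 1/2 ≤ a ≤ 1 and 0 < σ < 1. Then for all real t,
|Γ(σ + it) ζ(σ + it, a)| ≤ Γ(σ)|ζ(σ, a)|. -/
theorem abs_gamma_hurwitzZeta_le (a σ : ℝ) (ha : 1 / 2 ≤ a) (ha1 : a ≤ 1)
    (hσ0 : 0 < σ) (hσ1 : σ < 1) (t : ℝ) :
    ‖Complex.Gamma (σ + t * Complex.I)
        * HurwitzZeta.hurwitzZeta (a : UnitAddCircle) (σ + t * Complex.I)‖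
      ≤ Real.Gamma σ
        * ‖HurwitzZeta.hurwitzZeta (a : UnitAddCircle) (σ : ℂ)‖ := by
  classical
  set s : ℂ := (σ : ℂ) + (t : ℂ) * Complex.I with hs
  have hre : s.re = σ := by simp [hs]
  have h1 : mellin (HurwitzAux.Hc a) s
      = Complex.Gamma s * HurwitzZeta.hurwitzZeta (a : UnitAddCircle) s :=
    HurwitzAux.key_eq ha ha1 (by rw [hre]; exact hσ0) (by rw [hre]; exact hσ1)
  have h2 : mellin (HurwitzAux.Hc a) (σ : ℂ)
      = Complex.Gamma (σ : ℂ) * HurwitzZeta.hurwitzZeta (a : UnitAddCircle) (σ : ℂ) :=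
    HurwitzAux.key_eq ha ha1 (by simpa using hσ0) (by simpa using hσ1)
  set J : ℝ := ∫ x in Set.Ioi (0 : ℝ), x ^ (σ - 1) * HurwitzAux.Hf a x with hJ
  have hcast : ((σ : ℂ) - 1) = ((σ - 1 : ℝ) : ℂ) := by push_cast; ring
  have hmσ : mellin (HurwitzAux.Hc a) (σ : ℂ) = (J : ℂ) := by
    rw [mellin, hJ]
    refine (MeasureTheory.setIntegral_congr_fun measurableSet_Ioi
      (fun x hx => ?_)).trans integral_ofReal
    have hx0 : (0 : ℝ) < x := hx
    show (x : ℂ) ^ ((σ : ℂ) - 1) • HurwitzAux.Hc a x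
      = ((x ^ (σ - 1) * HurwitzAux.Hf a x : ℝ) : ℂ)
    rw [smul_eq_mul, HurwitzAux.Hc, Complex.ofReal_mul, Complex.ofReal_cpow hx0.le, hcast]
  have hJle : J ≤ 0 := by
    rw [hJ]
    refine MeasureTheory.setIntegral_nonpos measurableSet_Ioi (fun x hx => ?_)
    have hx0 : (0 : ℝ) < x := hx
    have h := HurwitzAux.Hf_nonpos ha hx0
    nlinarith [Real.rpow_nonneg hx0.le (σ - 1)]
  have hRHS : Real.Gamma σ * ‖HurwitzZeta.hurwitzZeta (a : UnitAddCircle) (σ : ℂ)‖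
      = -J := by
    have hG : ‖Complex.Gamma (σ : ℂ)‖ = Real.Gamma σ := by
      rw [Complex.Gamma_ofReal, Complex.norm_real, Real.norm_eq_abs,
        abs_of_pos (Real.Gamma_pos_of_pos hσ0)]
    calc Real.Gamma σ * ‖HurwitzZeta.hurwitzZeta (a : UnitAddCircle) (σ : ℂ)‖
        = ‖Complex.Gamma (σ : ℂ)‖
          * ‖HurwitzZeta.hurwitzZeta (a : UnitAddCircle) (σ : ℂ)‖ := by rw [hG]
      _ = ‖Complex.Gamma (σ : ℂ)
            * HurwitzZeta.hurwitzZeta (a : UnitAddCircle) (σ : ℂ)‖ :=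
          (norm_mul _ _).symm
      _ = ‖(J : ℂ)‖ := by rw [← h2, hmσ]
      _ = |J| := by rw [Complex.norm_real, Real.norm_eq_abs]
      _ = -J := abs_of_nonpos hJle
  have hnorm_int : (∫ x in Set.Ioi (0 : ℝ), ‖(x : ℂ) ^ (s - 1) • HurwitzAux.Hc a x‖) = -J := by
    rw [hJ, ← MeasureTheory.integral_neg]
    refine MeasureTheory.setIntegral_congr_fun measurableSet_Ioi (fun x hx => ?_)
    have hx0 : (0 : ℝ) < x := hx
    rw [norm_smul, HurwitzAux.Hc, Complex.norm_real, Real.norm_eq_abs,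
      Complex.norm_cpow_eq_rpow_re_of_pos hx0,
      abs_of_nonpos (HurwitzAux.Hf_nonpos ha hx0)]
    have hsre : (s - 1).re = σ - 1 := by simp [hs]
    rw [hsre]
    ring
  calc ‖Complex.Gamma s * HurwitzZeta.hurwitzZeta (a : UnitAddCircle) s‖
      = ‖mellin (HurwitzAux.Hc a) s‖ := by rw [h1]
    _ ≤ ∫ x in Set.Ioi (0 : ℝ), ‖(x : ℂ) ^ (s - 1) • HurwitzAux.Hc a x‖ := by
        rw [mellin]
        exact MeasureTheory.norm_integral_le_integral_norm _
    _ = -J := hnorm_int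
    _ = Real.Gamma σ * ‖HurwitzZeta.hurwitzZeta (a : UnitAddCircle) (σ : ℂ)‖ :=
        hRHS.symm
end

section
/- For σ > 1, 0 < a ≤ 1, z ∈ (0,1], and all real t, the Fourier transform identity ∫_ℝ e^{ity} · e^{σy} exp((1−a)e^y)/(exp(e^y)−z) dy = Γ(σ+it)Φ(σ+it,a,z) holds. -/
open MeasureTheory Set

/-- For σ > 1, 0 < a ≤ 1, z ∈ (0,1], and all real t,
∫_ℝ e^{ity} e^{σy} exp((1−a)e^y)/(exp(e^y)−z) dy = Γ(σ+it)Φ(σ+it,a,z). -/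
theorem lerch_fourier (σ a z t : ℝ) (hσ : 1 < σ) (ha : 0 < a) (ha1 : a ≤ 1)
    (hz0 : 0 < z) (hz1 : z ≤ 1) :
    (∫ y : ℝ, Complex.exp (Complex.I * t * y)
        * ((Real.exp (σ * y) * Real.exp ((1 - a) * Real.exp y)
            / (Real.exp (Real.exp y) - z) : ℝ) : ℂ))
      = Complex.Gamma (σ + t * Complex.I)
        * ∑' n : ℕ, (z : ℂ) ^ n / ((n : ℂ) + a) ^ ((σ : ℂ) + t * Complex.I) := by
  set s : ℂ := (σ : ℂ) + t * Complex.I with hs_def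
  have hs_re : s.re = σ := by simp [hs_def]
  have hs_pos : 0 < s.re := by rw [hs_re]; linarith
  set F : ℝ → ℂ := fun x => ((Real.exp ((1 - a) * x) / (Real.exp x - z) : ℝ) : ℂ) with hF_def
  -- Step A: hasSum_mellin
  have key : HasSum (fun n : ℕ => Complex.Gamma s * (z : ℂ) ^ n / ((n : ℝ) + a : ℝ) ^ s)
      (mellin F s) := by
    apply hasSum_mellin (a := fun n : ℕ => (z : ℂ) ^ n) (p := fun n : ℕ => (n : ℝ) + a)
    · intro n; right; positivity
    · exact hs_pos
    · intro x hx
      rw [mem_Ioi] at hx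
      have hex : (1 : ℝ) < Real.exp x := by
        simpa using Real.exp_lt_exp.mpr hx
      have hw : |z * Real.exp (-x)| < 1 := by
        rw [abs_of_pos (by positivity)]
        calc z * Real.exp (-x) ≤ 1 * Real.exp (-x) := by gcongr
        _ < 1 := by simpa using Real.exp_lt_exp.mpr (show -x < 0 by linarith)
      have hden : 0 < Real.exp x - z := by linarith
      have hre : HasSum (fun n : ℕ => z ^ n * Real.exp (-((n : ℝ) + a) * x))
          (Real.exp ((1 - a) * x) / (Real.exp x - z)) := by
        have hgeom := (hasSum_geometric_of_abs_lt_one hw).mul_left (Real.exp (-(a * x)))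
        have hfun : (fun n : ℕ => z ^ n * Real.exp (-((n : ℝ) + a) * x))
            = fun n : ℕ => Real.exp (-(a * x)) * (z * Real.exp (-x)) ^ n := by
          funext n
          rw [mul_pow, ← Real.exp_nat_mul,
            show -((n : ℝ) + a) * x = (n : ℝ) * (-x) + (-(a * x)) from by ring, Real.exp_add]
          ring
        have h1 : 1 - z * Real.exp (-x) = Real.exp (-x) * (Real.exp x - z) := by
          rw [mul_sub, ← Real.exp_add]
          simp [mul_comm]
        have hval : Real.exp ((1 - a) * x) / (Real.exp x - z)
            = Real.exp (-(a * x)) * (1 - z * Real.exp (-x))⁻¹ := by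
          rw [h1, mul_inv, show (Real.exp (-x))⁻¹ = Real.exp x from by rw [Real.exp_neg, inv_inv],
            ← mul_assoc, ← Real.exp_add, ← div_eq_mul_inv,
            show -(a * x) + x = (1 - a) * x from by ring]
        rw [hfun, hval]
        exact hgeom
      have := hre.map Complex.ofRealCLM Complex.continuous_ofReal
      simp only [Function.comp_def, Complex.ofRealCLM_apply, Complex.ofReal_mul,
        Complex.ofReal_pow] at this
      exact this
    · -- summability
      rw [hs_re]
      apply Summable.of_nonneg_of_le (fun n => by positivity)
        (fun n => ?_) (((Real.summable_one_div_nat_add_rpow a σ).mpr hσ))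
      have h1 : ‖(z : ℂ) ^ n‖ = z ^ n := by
        rw [norm_pow, Complex.norm_real, Real.norm_eq_abs, abs_of_pos hz0]
      rw [h1, abs_of_pos (by positivity : (0 : ℝ) < (n : ℝ) + a)]
      have h2 : z ^ n ≤ 1 := pow_le_one₀ hz0.le hz1
      gcongr
  -- Step B: tsum
  have htsum : mellin F s = Complex.Gamma s * ∑' n : ℕ, (z : ℂ) ^ n / ((n : ℂ) + a) ^ s := by
    rw [← key.tsum_eq, ← tsum_mul_left]
    congr 1 with n
    rw [mul_div_assoc]
    norm_num
  -- Step C: change of variables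
  have hcv : mellin F s = ∫ y : ℝ, Complex.exp (Complex.I * t * y)
      * ((Real.exp (σ * y) * Real.exp ((1 - a) * Real.exp y)
          / (Real.exp (Real.exp y) - z) : ℝ) : ℂ) := by
    rw [mellin, ← Real.range_exp, ← image_univ,
      integral_image_eq_integral_abs_deriv_smul MeasurableSet.univ
        (fun x _ => (Real.hasDerivAt_exp x).hasDerivWithinAt) Real.exp_injective.injOn,
      MeasureTheory.setIntegral_univ]
    congr 1 with y
    rw [abs_of_pos (Real.exp_pos y)]
    have hpow : ((Real.exp y : ℂ) ^ (s - 1)) * (Real.exp y : ℂ)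
        = Complex.exp (Complex.I * t * y) * ((Real.exp (σ * y) : ℝ) : ℂ) := by
      rw [Complex.ofReal_exp]
      nth_rewrite 2 [← Complex.cpow_one (Complex.exp (y : ℂ))]
      rw [← Complex.cpow_add _ _ (Complex.exp_ne_zero _), sub_add_cancel,
        Complex.cpow_def_of_ne_zero (Complex.exp_ne_zero _),
        Complex.log_exp (by simpa using Real.pi_pos) (by simp [Real.pi_nonneg]),
        show (y : ℂ) * s = Complex.I * t * y + ((σ * y : ℝ) : ℂ) from by
          rw [hs_def]; push_cast; ring,
        Complex.exp_add, Complex.ofReal_exp]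
    calc (Real.exp y : ℝ) • ((Real.exp y : ℂ) ^ (s - 1) • F (Real.exp y))
        = ((Real.exp y : ℂ) ^ (s - 1) * (Real.exp y : ℂ)) * F (Real.exp y) := by
          rw [smul_eq_mul, Complex.real_smul]; ring
      _ = _ := by
          rw [hpow, hF_def]
          push_cast
          ring
  rw [← hcv, htsum]
end

section
/- For 1/2 ≤ a ≤ 1 and 0 < σ < 1, the function P(y) = (e^{σy}/C)·(exp((1−a)e^y)/(exp(e^y)−1) − e^{-y}) with C = Γ(σ)ζ(σ,a) is a probability density on ℝ: P ≥ 0 and ∫_ℝ P(y) dy = 1. -/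
open MeasureTheory

section HurwitzDensityAux
open Real Set Filter Asymptotics Topology HurwitzZeta

noncomputable def Fr (a t : ℝ) : ℝ := Real.exp ((1-a)*t)/(Real.exp t - 1) - 1/t
noncomputable def Gr (a t : ℝ) : ℝ := Real.exp ((1-a)*t)/(Real.exp t - 1)
noncomputable def Gc (a : ℝ) (t : ℝ) : ℂ := ((Gr a t : ℝ) : ℂ)
noncomputable def Fc (a : ℝ) (t : ℝ) : ℂ := ((Fr a t : ℝ) : ℂ)
noncomputable def M1 (a : ℝ) : ℂ → ℂ := mellin (Set.indicator (Set.Ioc 0 1) (Fc a))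
noncomputable def M3 (a : ℝ) : ℂ → ℂ := mellin (Set.indicator (Set.Ioi 1) (Gc a))
noncomputable def phi (a : ℝ) (z : ℂ) : ℂ :=
  Complex.Gamma z * ((z-1) * (HurwitzZeta.hurwitzZeta a z - 1/(z-1)/Complex.Gammaℝ z)
    + (Complex.Gammaℝ z)⁻¹)
noncomputable def psi (a : ℝ) (z : ℂ) : ℂ := (z-1) * (M1 a z + M3 a z) + 1

lemma key_ineq {a x : ℝ} (ha : 1/2 ≤ a) (hx : 0 < x) :
    x * Real.exp ((1-a)*x) < Real.exp x - 1 := by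
  set u := x/2 with hu
  have hu0 : 0 < u := by positivity
  have hv : 1 + u + u^2/2 + u^3/6 ≤ Real.exp u := by
    have := Real.sum_le_exp_of_nonneg hu0.le 4
    norm_num [Finset.sum_range_succ, Nat.factorial] at this
    nlinarith [this]
  have h1 : Real.exp ((1-a)*x) ≤ Real.exp u := by
    apply Real.exp_le_exp.2; nlinarith
  have hx2 : Real.exp x = Real.exp u * Real.exp u := by
    rw [← Real.exp_add, hu]; ring_nf
  have hgoal : 2*u*Real.exp u < Real.exp u * Real.exp u - 1 := by
    nlinarith [Real.exp_pos u, sq_nonneg (Real.exp u - u), sq_nonneg u,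
      mul_pos hu0 (mul_pos hu0 hu0)]
  calc x * Real.exp ((1-a)*x) ≤ x * Real.exp u := by
        apply mul_le_mul_of_nonneg_left h1 hx.le
    _ = 2*u*Real.exp u := by rw [hu]; ring
    _ < Real.exp x - 1 := by rw [hx2]; exact hgoal

lemma exp_sub_one_pos {t : ℝ} (ht : 0 < t) : 0 < Real.exp t - 1 := by
  have := Real.add_one_le_exp t
  nlinarith [Real.exp_pos t]


lemma Fr_neg {a t : ℝ} (ha : 1/2 ≤ a) (ht : 0 < t) : Fr a t < 0 := by
  have h1 := exp_sub_one_pos ht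
  have h2 := key_ineq ha ht
  rw [Fr, sub_neg, div_lt_div_iff₀ h1 ht]
  linarith

lemma exp_sub_one_ge {t : ℝ} : t ≤ Real.exp t - 1 := by
  linarith [Real.add_one_le_exp t]

lemma Fr_bound {a t : ℝ} (ha : 1/2 ≤ a) (ha1 : a ≤ 1) (ht : t ∈ Ioc (0:ℝ) 1) :
    |Fr a t| ≤ 3 := by
  obtain ⟨ht0, ht1⟩ := ht
  have hd : 0 < Real.exp t - 1 := exp_sub_one_pos ht0
  have hnum : Fr a t = (t * Real.exp ((1-a)*t) - (Real.exp t - 1)) / (t * (Real.exp t - 1)) := by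
    rw [Fr]; field_simp
  have hden : t^2 ≤ t * (Real.exp t - 1) := by
    nlinarith [exp_sub_one_ge (t := t)]
  have h1 : |Real.exp ((1-a)*t) - 1 - (1-a)*t| ≤ ((1-a)*t)^2 := by
    apply Real.abs_exp_sub_one_sub_id_le
    rw [abs_le]; constructor <;> nlinarith
  have h2 : |Real.exp t - 1 - t| ≤ t^2 := by
    apply Real.abs_exp_sub_one_sub_id_le
    rw [abs_le]; constructor <;> nlinarith
  have hnb : |t * Real.exp ((1-a)*t) - (Real.exp t - 1)| ≤ 3 * t^2 := by
    have e1 : t * Real.exp ((1-a)*t) - (Real.exp t - 1)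
        = t * (Real.exp ((1-a)*t) - 1 - (1-a)*t) - (Real.exp t - 1 - t) + (1-a)*t^2 := by ring
    rw [e1]
    have := abs_mul t (Real.exp ((1-a)*t) - 1 - (1-a)*t)
    calc |t * (Real.exp ((1-a)*t) - 1 - (1-a)*t) - (Real.exp t - 1 - t) + (1-a)*t^2|
        ≤ |t * (Real.exp ((1-a)*t) - 1 - (1-a)*t)| + |Real.exp t - 1 - t| + |(1-a)*t^2| := by
          calc _ ≤ |t * (Real.exp ((1-a)*t) - 1 - (1-a)*t) - (Real.exp t - 1 - t)| + |(1-a)*t^2| :=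
                abs_add_le _ _
            _ ≤ _ := by gcongr; exact abs_sub _ _
      _ ≤ 3 * t^2 := by
          rw [abs_mul, abs_mul, abs_of_nonneg ht0.le, abs_of_nonneg (by positivity : (0:ℝ) ≤ t^2),
            abs_of_nonneg (by linarith : (0:ℝ) ≤ 1-a)]
          have hh := mul_le_mul_of_nonneg_left h1 ht0.le
          have k1 : ((1-a)*t)^2 ≤ t^2 := by
            have h5 : (1-a)^2 ≤ 1 := by nlinarith
            calc ((1-a)*t)^2 = (1-a)^2 * t^2 := by ring
              _ ≤ 1 * t^2 := by gcongr
              _ = t^2 := one_mul _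
          have k2 : t*t^2 ≤ t^2 := by nlinarith
          have k3 : t * ((1-a)*t)^2 ≤ t * t^2 := by nlinarith
          have k4 : (1-a)*t^2 ≤ t^2 := by nlinarith
          linarith
  rw [hnum, abs_div, abs_of_pos (by positivity : 0 < t * (Real.exp t - 1))]
  rw [div_le_iff₀ (by positivity)]
  nlinarith

lemma Gr_bound_top {a t : ℝ} (ht : 1 ≤ t) : |Gr a t| ≤ 2 * Real.exp (-a*t) := by
  have ht0 : (0:ℝ) < t := by linarith
  have hd : Real.exp t / 2 ≤ Real.exp t - 1 := by
    have h2 : (2:ℝ) ≤ Real.exp t := by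
      calc (2:ℝ) ≤ 1 + t := by linarith
        _ ≤ Real.exp t := by linarith [Real.add_one_le_exp t]
    linarith
  have hd0 : 0 < Real.exp t - 1 := exp_sub_one_pos ht0
  rw [Gr, abs_of_pos (by positivity)]
  rw [div_le_iff₀ hd0]
  have : 2 * Real.exp (-a*t) * (Real.exp t - 1) ≥ 2 * Real.exp (-a*t) * (Real.exp t / 2) := by
    gcongr
  have he : Real.exp ((1-a)*t) = Real.exp (-a*t) * Real.exp t := by
    rw [← Real.exp_add]; ring_nf
  rw [he]; linarith

lemma hasSum_Gr {a t : ℝ} (ha : 0 < a) (ht : 0 < t) :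
    HasSum (fun n : ℕ ↦ Real.exp (-((n:ℝ)+a)*t)) (Gr a t) := by
  have hr0 : 0 ≤ Real.exp (-t) := (Real.exp_pos _).le
  have hr1 : Real.exp (-t) < 1 := by
    rw [Real.exp_lt_one_iff]; linarith
  have hg := hasSum_geometric_of_lt_one hr0 hr1
  have h2 := (hg.mul_left (Real.exp ((1-a)*t) * Real.exp (-t)))
  have hfun : (fun n : ℕ ↦ Real.exp (-((n:ℝ)+a)*t))
      = fun n : ℕ ↦ Real.exp ((1-a)*t) * Real.exp (-t) * Real.exp (-t)^n := by
    funext n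
    rw [← Real.exp_nat_mul, ← Real.exp_add, ← Real.exp_add]
    ring_nf
  have hval : Gr a t = Real.exp ((1-a)*t) * Real.exp (-t) * (1 - Real.exp (-t))⁻¹ := by
    rw [Gr]
    have h3 : Real.exp t - 1 = Real.exp t * (1 - Real.exp (-t)) := by
      rw [mul_sub, ← Real.exp_add]; simp
    have h4 : (1:ℝ) - Real.exp (-t) ≠ 0 := by linarith
    have h4' : (1:ℝ) - (Real.exp t)⁻¹ ≠ 0 := by rw [← Real.exp_neg]; exact h4
    rw [h3, Real.exp_neg]
    field_simp
  rw [hfun, hval]; exact h2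

lemma mellin_Gc_eq {a : ℝ} (ha : 0 < a) (ha' : a ≤ 1) {s : ℂ} (hs : 1 < s.re) :
    mellin (Gc a) s = Complex.Gamma s * hurwitzZeta a s := by
  have hp : ∀ n : ℕ, (1:ℂ) = 0 ∨ 0 < (n:ℝ) + a := fun n ↦ Or.inr (by positivity)
  have hF : ∀ t ∈ Ioi (0:ℝ), HasSum (fun n : ℕ ↦ (1:ℂ) * Real.exp (-((n:ℝ)+a) * t)) (Gc a t) := by
    intro t ht
    simpa [Gc] using (Complex.hasSum_ofReal.mpr (hasSum_Gr ha ht))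
  have h_sum : Summable fun n : ℕ ↦ ‖(1:ℂ)‖ / ((n:ℝ) + a) ^ s.re := by
    have := (Real.summable_one_div_nat_add_rpow a s.re).mpr hs
    refine this.congr fun n ↦ ?_
    rw [norm_one, abs_of_pos (by positivity : 0 < (n:ℝ)+a)]
  have key := hasSum_mellin hp (by linarith : 0 < s.re) hF h_sum
  have h2 : HasSum (fun n : ℕ ↦ Complex.Gamma s * (1 / ((n:ℂ) + a) ^ s))
      (Complex.Gamma s * hurwitzZeta a s) :=
    (hasSum_hurwitzZeta_of_one_lt_re ⟨by linarith, ha'⟩ hs).mul_left _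
  refine key.unique (h2.congr_fun fun n ↦ ?_)
  push_cast
  rw [mul_one_div, mul_div_assoc, mul_one_div]

lemma Gr_cont (a : ℝ) : ContinuousOn (Gr a) (Ioi 0) := by
  apply ContinuousOn.div (by fun_prop) (by fun_prop)
  intro t ht
  have := exp_sub_one_pos (mem_Ioi.mp ht); linarith

lemma Fr_cont (a : ℝ) : ContinuousOn (Fr a) (Ioi 0) := by
  apply (Gr_cont a).sub
  apply ContinuousOn.div continuousOn_const continuousOn_id
  intro t ht; exact ne_of_gt (mem_Ioi.mp ht)

lemma Gc_cont (a : ℝ) : ContinuousOn (Gc a) (Ioi 0) :=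
  Complex.continuous_ofReal.comp_continuousOn (Gr_cont a)

lemma Fc_cont (a : ℝ) : ContinuousOn (Fc a) (Ioi 0) :=
  Complex.continuous_ofReal.comp_continuousOn (Fr_cont a)


lemma Gr_bound_zero {a t : ℝ} (ha : 1/2 ≤ a) (ha1 : a ≤ 1) (ht : t ∈ Ioc (0:ℝ) 1) :
    |Gr a t| ≤ 3 * t⁻¹ := by
  obtain ⟨ht0, ht1⟩ := ht
  have hd : 0 < Real.exp t - 1 := exp_sub_one_pos ht0
  have h1 : Real.exp ((1-a)*t) ≤ 3 := by
    calc Real.exp ((1-a)*t) ≤ Real.exp 1 := by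
          apply Real.exp_le_exp.2; nlinarith
      _ ≤ 3 := by linarith [Real.exp_one_lt_d9]
  have h2 : t ≤ Real.exp t - 1 := by linarith [Real.add_one_le_exp t]
  rw [Gr, abs_of_pos (by positivity)]
  rw [div_le_iff₀ hd]
  calc Real.exp ((1-a)*t) ≤ 3 := h1
    _ = 3 * t⁻¹ * t := by field_simp
    _ ≤ 3 * t⁻¹ * (Real.exp t - 1) := by
        have : (0:ℝ) < 3 * t⁻¹ := by positivity
        nlinarith

lemma Fr_bound_top {a t : ℝ} (ha : 1/2 ≤ a) (ht : 1 ≤ t) : |Fr a t| ≤ 5 * t⁻¹ := by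
  have ht0 : (0:ℝ) < t := by linarith
  have h1 := Gr_bound_top (a := a) ht
  have h2 : Real.exp (-a*t) ≤ 2 * t⁻¹ := by
    have h3 : t/2 ≤ Real.exp (t/2) := by linarith [Real.add_one_le_exp (t/2)]
    have h4 : Real.exp (-a*t) ≤ Real.exp (-(t/2)) := by
      apply Real.exp_le_exp.2; nlinarith
    rw [Real.exp_neg] at h4
    have h5 : Real.exp (t/2) ≥ t/2 := h3
    have h6 : (Real.exp (t/2))⁻¹ ≤ (t/2)⁻¹ := by
      apply inv_anti₀ (by positivity) h3
    calc Real.exp (-a*t) ≤ (Real.exp (t/2))⁻¹ := h4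
      _ ≤ (t/2)⁻¹ := h6
      _ = 2 * t⁻¹ := by field_simp
  have heq : Fr a t = Gr a t - 1/t := rfl
  have habs : |Fr a t| ≤ |Gr a t| + |1/t| := by rw [heq]; exact abs_sub _ _
  rw [abs_of_pos (by positivity : (0:ℝ) < 1/t), one_div] at habs
  linarith

-- IsBigO statements
lemma isBigO_Fr_top {a : ℝ} (ha : 1/2 ≤ a) :
    (Fr a) =O[atTop] (fun t : ℝ ↦ t ^ (-1:ℝ)) := by
  apply IsBigO.of_bound 5
  filter_upwards [eventually_ge_atTop (1:ℝ)] with t ht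
  rw [Real.norm_eq_abs, Real.norm_eq_abs, Real.rpow_neg_one, abs_of_pos
    (by positivity : (0:ℝ) < t⁻¹)]
  exact Fr_bound_top ha ht

lemma isBigO_Fr_zero {a : ℝ} (ha : 1/2 ≤ a) (ha1 : a ≤ 1) :
    (Fr a) =O[𝓝[>] 0] (fun t : ℝ ↦ t ^ (-(0:ℝ))) := by
  apply IsBigO.of_bound 3
  filter_upwards [Ioc_mem_nhdsGT_of_mem (by norm_num : (0:ℝ) ∈ Ico (0:ℝ) 1)] with t ht
  rw [Real.norm_eq_abs, Real.norm_eq_abs, neg_zero, Real.rpow_zero, abs_one, mul_one]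
  exact Fr_bound ha ha1 ht

lemma isBigO_Fc_top {a : ℝ} (ha : 1/2 ≤ a) :
    (Fc a) =O[atTop] (fun t : ℝ ↦ t ^ (-1:ℝ)) := by
  exact Complex.isBigO_ofReal_left.mpr (isBigO_Fr_top ha)

lemma isBigO_Gc_top {a : ℝ} : (Gc a) =O[atTop] (fun t : ℝ ↦ Real.exp (-a * t)) := by
  apply IsBigO.of_bound 2
  filter_upwards [eventually_ge_atTop (1:ℝ)] with t ht
  unfold Gc
  rw [Complex.norm_real, Real.norm_eq_abs, Real.norm_eq_abs, Real.abs_exp]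
  exact Gr_bound_top ht

lemma isBigO_Gc_zero {a : ℝ} (ha : 1/2 ≤ a) (ha1 : a ≤ 1) :
    (Gc a) =O[𝓝[>] 0] (fun t : ℝ ↦ t ^ (-1:ℝ)) := by
  apply IsBigO.of_bound 3
  filter_upwards [Ioc_mem_nhdsGT_of_mem (by norm_num : (0:ℝ) ∈ Ico (0:ℝ) 1)] with t ht
  unfold Gc
  rw [Complex.norm_real, Real.norm_eq_abs, Real.norm_eq_abs, Real.rpow_neg_one,
    abs_of_pos (inv_pos.mpr ht.1)]
  exact Gr_bound_zero ha ha1 ht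

-- real integrability of the main integrand
lemma intFr {a σ : ℝ} (ha : 1/2 ≤ a) (ha1 : a ≤ 1) (h0 : 0 < σ) (h1 : σ < 1) :
    IntegrableOn (fun t : ℝ ↦ t ^ (σ - 1) * Fr a t) (Ioi 0) := by
  apply mellin_convergent_of_isBigO_scalar
    ((Fr_cont a).locallyIntegrableOn measurableSet_Ioi) (isBigO_Fr_top ha) h1
    (isBigO_Fr_zero ha ha1) h0

-- == new content ==
lemma indicator_cpow_smul (S : Set ℝ) (f : ℝ → ℂ) (s : ℂ) :
    (fun t : ℝ ↦ (t:ℂ)^(s-1) • (indicator S f t)) = indicator S (fun t ↦ (t:ℂ)^(s-1) • f t) := by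
  funext t; by_cases h : t ∈ S <;> simp [h]

lemma mellin_indicator (S : Set ℝ) (hS : MeasurableSet S) (hsub : S ⊆ Ioi 0) (f : ℝ → ℂ) (s : ℂ) :
    mellin (indicator S f) s = ∫ t in S, (t:ℂ)^(s-1) • f t := by
  rw [mellin, indicator_cpow_smul, integral_indicator hS, Measure.restrict_restrict hS,
    inter_eq_self_of_subset_left hsub]

lemma mellinConvergent_indicator_iff (S : Set ℝ) (hS : MeasurableSet S) (hsub : S ⊆ Ioi 0)
    (f : ℝ → ℂ) (s : ℂ) :
    MellinConvergent (indicator S f) s ↔ IntegrableOn (fun t : ℝ ↦ (t:ℂ)^(s-1) • f t) S := by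
  rw [MellinConvergent, indicator_cpow_smul, IntegrableOn, integrable_indicator_iff hS,
    IntegrableOn, Measure.restrict_restrict hS, inter_eq_self_of_subset_left hsub]
  exact Iff.rfl

lemma Gc_eq_Fc_add {a t : ℝ} (ht : 0 < t) : Gc a t = Fc a t + ((t:ℂ))^(-1:ℂ) := by
  have h1 : Fr a t = Gr a t - 1/t := rfl
  have h2 : ((t:ℂ))⁻¹ = ((1/t:ℝ):ℂ) := by push_cast; ring
  rw [Complex.cpow_neg_one, Fc, Gc, h1, Complex.ofReal_sub, h2]
  ring

lemma mellin_split {a : ℝ} (ha : 1/2 ≤ a) (ha1 : a ≤ 1) {s : ℂ} (hs : 1 < s.re) :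
    mellin (Gc a) s = M1 a s + 1/(s-1) + M3 a s := by
  unfold M1 M3
  have ha0 : (0:ℝ) < a := by linarith
  have hGconv : IntegrableOn (fun t : ℝ ↦ (t:ℂ)^(s-1) • Gc a t) (Ioi 0) :=
    mellinConvergent_of_isBigO_rpow_exp ha0 ((Gc_cont a).locallyIntegrableOn measurableSet_Ioi)
      isBigO_Gc_top (isBigO_Gc_zero ha ha1) (by norm_num; linarith)
  have hcpow := hasMellin_cpow_Ioc (-1) (by simp; linarith : 0 < s.re + (-1:ℂ).re)
  have hinv : IntegrableOn (fun t : ℝ ↦ (t:ℂ)^(s-1) • ((t:ℂ))^(-1:ℂ)) (Ioc 0 1) :=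
    (mellinConvergent_indicator_iff _ measurableSet_Ioc (fun t ht ↦ ht.1) _ s).mp hcpow.1
  have hsplit : Ioi (0:ℝ) = Ioc 0 1 ∪ Ioi 1 := (Ioc_union_Ioi_eq_Ioi zero_le_one).symm
  have hGioc : IntegrableOn (fun t : ℝ ↦ (t:ℂ)^(s-1) • Gc a t) (Ioc 0 1) :=
    hGconv.mono_set (by rw [hsplit]; exact subset_union_left)
  have hGioi : IntegrableOn (fun t : ℝ ↦ (t:ℂ)^(s-1) • Gc a t) (Ioi 1) :=
    hGconv.mono_set (by rw [hsplit]; exact subset_union_right)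
  have hFcint : IntegrableOn (fun t : ℝ ↦ (t:ℂ)^(s-1) • Fc a t) (Ioc 0 1) := by
    apply IntegrableOn.congr_fun (hGioc.sub hinv) ?_ measurableSet_Ioc
    intro t ht
    simp only [Pi.sub_apply]
    rw [Gc_eq_Fc_add ht.1, smul_add]
    ring
  have h1 : mellin (Gc a) s = (∫ t in Ioc (0:ℝ) 1, (t:ℂ)^(s-1) • Gc a t)
      + ∫ t in Ioi (1:ℝ), (t:ℂ)^(s-1) • Gc a t := by
    rw [mellin, hsplit, setIntegral_union (Ioc_disjoint_Ioi le_rfl) measurableSet_Ioi hGioc hGioi]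
  have h2 : (∫ t in Ioc (0:ℝ) 1, (t:ℂ)^(s-1) • Gc a t)
      = (∫ t in Ioc (0:ℝ) 1, (t:ℂ)^(s-1) • Fc a t)
        + ∫ t in Ioc (0:ℝ) 1, (t:ℂ)^(s-1) • ((t:ℂ))^(-1:ℂ) := by
    rw [← integral_add hFcint hinv]
    apply setIntegral_congr_fun measurableSet_Ioc
    intro t ht
    dsimp only
    rw [Gc_eq_Fc_add ht.1, smul_add]
  have h3 : (∫ t in Ioc (0:ℝ) 1, (t:ℂ)^(s-1) • ((t:ℂ))^(-1:ℂ)) = 1/(s-1) := by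
    have := hcpow.2
    rw [mellin_indicator _ measurableSet_Ioc (fun t ht ↦ ht.1)] at this
    rw [this]; ring_nf
  rw [h1, h2, h3, mellin_indicator _ measurableSet_Ioc (fun t ht ↦ ht.1),
    mellin_indicator _ measurableSet_Ioi (fun t ht ↦ mem_Ioi.mpr (lt_trans zero_lt_one (mem_Ioi.mp ht)))]

lemma int_Fc_Ioc {a : ℝ} (ha : 1/2 ≤ a) (ha1 : a ≤ 1) : IntegrableOn (Fc a) (Ioc 0 1) := by
  apply Integrable.mono' (g := fun _ : ℝ ↦ (3:ℝ))
    (integrableOn_const measure_Ioc_lt_top.ne)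
  · exact ((Fc_cont a).mono (Ioc_subset_Ioi_self)).aestronglyMeasurable measurableSet_Ioc
  · filter_upwards [ae_restrict_mem measurableSet_Ioc] with t ht
    unfold Fc
    rw [Complex.norm_real, Real.norm_eq_abs]
    exact Fr_bound ha ha1 ht

lemma int_Gc_Ioi {a : ℝ} (ha : 1/2 ≤ a) : IntegrableOn (Gc a) (Ioi 1) := by
  have ha0 : (0:ℝ) < a := by linarith
  apply Integrable.mono' (((exp_neg_integrableOn_Ioi 1 ha0).const_mul 2))
  · exact ((Gc_cont a).mono (fun t (ht : t ∈ Ioi 1) ↦ mem_Ioi.mpr (lt_trans zero_lt_one (mem_Ioi.mp ht)))).aestronglyMeasurable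
      measurableSet_Ioi
  · filter_upwards [ae_restrict_mem measurableSet_Ioi] with t ht
    unfold Gc
    rw [Complex.norm_real, Real.norm_eq_abs]
    exact Gr_bound_top ht.le

lemma diff_M1 {a : ℝ} (ha : 1/2 ≤ a) (ha1 : a ≤ 1) {s : ℂ} (hs : 0 < s.re) :
    DifferentiableAt ℂ (M1 a) s := by
  unfold M1
  apply mellin_differentiableAt_of_isBigO_rpow (a := s.re + 1) (b := 0) ?_ ?_ (by linarith) ?_ hs
  · exact (((integrable_indicator_iff measurableSet_Ioc).mpr
      (int_Fc_Ioc ha ha1)).locallyIntegrable).locallyIntegrableOn _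
  · apply IsBigO.of_bound 0
    filter_upwards [eventually_gt_atTop (1:ℝ)] with t ht
    rw [indicator_of_notMem (by simp [ht.le]; intro h; linarith : t ∉ Ioc (0:ℝ) 1)]
    simp
  · apply IsBigO.of_bound 3
    filter_upwards [Ioc_mem_nhdsGT_of_mem (by norm_num : (0:ℝ) ∈ Ico (0:ℝ) 1)] with t ht
    rw [indicator_of_mem ht, neg_zero, Real.rpow_zero, norm_one, mul_one]
    unfold Fc
    rw [Complex.norm_real, Real.norm_eq_abs]
    exact Fr_bound ha ha1 ht

lemma diff_M3 {a : ℝ} (ha : 1/2 ≤ a) {s : ℂ} (hs : 0 < s.re) :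
    DifferentiableAt ℂ (M3 a) s := by
  unfold M3
  have ha0 : (0:ℝ) < a := by linarith
  apply mellin_differentiableAt_of_isBigO_rpow_exp (a := a) (b := 0) ha0 ?_ ?_ ?_ hs
  · exact (((integrable_indicator_iff measurableSet_Ioi).mpr
      (int_Gc_Ioi ha)).locallyIntegrable).locallyIntegrableOn _
  · apply IsBigO.of_bound 2
    filter_upwards [eventually_gt_atTop (1:ℝ)] with t ht
    rw [indicator_of_mem (mem_Ioi.mpr ht)]
    unfold Gc
    rw [Complex.norm_real, Real.norm_eq_abs, Real.norm_eq_abs, Real.abs_exp]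
    exact Gr_bound_top ht.le
  · apply IsBigO.of_bound 0
    filter_upwards [Ioc_mem_nhdsGT_of_mem (by norm_num : (0:ℝ) ∈ Ico (0:ℝ) 1)] with t ht
    rw [indicator_of_notMem (by simp [ht.2] : t ∉ Ioi (1:ℝ))]
    simp

lemma continuation {a : ℝ} (ha : 1/2 ≤ a) (ha1 : a ≤ 1) {σ : ℝ} (h0 : 0 < σ) (h1 : σ < 1) :
    Complex.Gamma σ * hurwitzZeta a σ = M1 a σ + M3 a σ + 1/((σ:ℂ)-1) := by
  have ha0 : (0:ℝ) < a := by linarith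
  have hU : IsOpen {z : ℂ | 0 < z.re} := isOpen_lt continuous_const Complex.continuous_re
  have hUpre : IsPreconnected {z : ℂ | 0 < z.re} := (convex_halfSpace_re_gt 0).isPreconnected
  have hφ : DifferentiableOn ℂ (phi a) {z : ℂ | 0 < z.re} := by
    intro z hz
    have hz0 : 0 < z.re := hz
    apply DifferentiableAt.differentiableWithinAt
    have hGa : DifferentiableAt ℂ Complex.Gamma z := by
      apply Complex.differentiableAt_Gamma
      intro m hm
      rw [hm] at hz0
      simp only [Complex.neg_re, Complex.natCast_re] at hz0
      have := Nat.cast_nonneg (α := ℝ) m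
      linarith
    have hh : DifferentiableAt ℂ (fun z ↦ hurwitzZeta a z - 1/(z-1)/Complex.Gammaℝ z) z := by
      by_cases hz1 : z = 1
      · subst hz1; exact differentiableAt_hurwitzZeta_sub_one_div a
      · apply DifferentiableAt.sub (differentiableAt_hurwitzZeta a hz1)
        have he : (fun z : ℂ ↦ 1/(z-1)/Complex.Gammaℝ z) = fun z : ℂ ↦ (1/(z-1)) * (Complex.Gammaℝ z)⁻¹ := by
          funext w; rw [div_eq_mul_inv]
        rw [he]
        have hd1 : DifferentiableAt ℂ (fun w : ℂ ↦ 1/(w-1)) z :=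
          (differentiableAt_const (1:ℂ)).div
            (differentiableAt_fun_id.sub (differentiableAt_const 1)) (sub_ne_zero.mpr hz1)
        exact hd1.mul (Complex.differentiable_Gammaℝ_inv z)
    unfold phi
    exact hGa.mul (((differentiableAt_id.sub (differentiableAt_const 1)).mul hh).add
      (Complex.differentiable_Gammaℝ_inv z))
  have hψ : DifferentiableOn ℂ (psi a) {z : ℂ | 0 < z.re} := by
    intro z hz
    have hz0 : 0 < z.re := hz
    apply DifferentiableAt.differentiableWithinAt
    unfold psi
    exact ((differentiableAt_id.sub (differentiableAt_const 1)).mul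
      ((diff_M1 ha ha1 hz0).add (diff_M3 ha hz0))).add (differentiableAt_const 1)
  have hφψ : EqOn (phi a) (psi a) {z : ℂ | 1 < z.re} := by
    intro z hz
    have hz' : 1 < z.re := hz
    have hz1 : z ≠ 1 := by
      intro h; rw [h] at hz'; simp at hz'
    have hzU : 0 < z.re := lt_trans zero_lt_one hz'
    have hzne : z - 1 ≠ 0 := sub_ne_zero.mpr hz1
    have hGne : Complex.Gammaℝ z ≠ 0 := Complex.Gammaℝ_ne_zero_of_re_pos hzU
    have e1 : (z-1)*(hurwitzZeta a z - 1/(z-1)/Complex.Gammaℝ z) + (Complex.Gammaℝ z)⁻¹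
        = (z-1) * hurwitzZeta a z := by
      field_simp
      ring
    have hG := mellin_Gc_eq ha0 ha1 hz'
    have hsp := mellin_split ha ha1 hz'
    unfold phi psi
    rw [e1]
    have e2 : Complex.Gamma z * hurwitzZeta a z = M1 a z + 1/(z-1) + M3 a z := by
      rw [← hG, hsp]
    calc Complex.Gamma z * ((z-1) * hurwitzZeta a z)
        = (z-1) * (Complex.Gamma z * hurwitzZeta a z) := by ring
      _ = (z-1) * (M1 a z + 1/(z-1) + M3 a z) := by rw [e2]
      _ = (z-1) * (M1 a z + M3 a z) + 1 := by field_simp; ring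
  have hev : phi a =ᶠ[𝓝 (2:ℂ)] psi a := by
    have hopen : IsOpen {z : ℂ | 1 < z.re} := isOpen_lt continuous_const Complex.continuous_re
    exact Filter.eventuallyEq_of_mem (hopen.mem_nhds (by norm_num)) hφψ
  have heq := (hφ.analyticOnNhd hU).eqOn_of_preconnected_of_eventuallyEq
    (hψ.analyticOnNhd hU) hUpre (by norm_num : (2:ℂ) ∈ {z : ℂ | 0 < z.re}) hev
  have hφσ := heq (show (σ:ℂ) ∈ {z : ℂ | 0 < z.re} by simp [h0])
  have hσ1 : (σ:ℂ) ≠ 1 := by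
    intro h; exact absurd (Complex.ofReal_eq_one.mp h) (ne_of_lt h1)
  have hσne : (σ:ℂ) - 1 ≠ 0 := sub_ne_zero.mpr hσ1
  have hGne : Complex.Gammaℝ (σ:ℂ) ≠ 0 := Complex.Gammaℝ_ne_zero_of_re_pos (by simp [h0])
  unfold phi psi at hφσ
  have e1 : ((σ:ℂ)-1)*(hurwitzZeta a σ - 1/((σ:ℂ)-1)/Complex.Gammaℝ σ) + (Complex.Gammaℝ (σ:ℂ))⁻¹
      = ((σ:ℂ)-1) * hurwitzZeta a σ := by field_simp; ring
  rw [e1] at hφσ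
  apply mul_right_cancel₀ hσne
  calc Complex.Gamma σ * hurwitzZeta a σ * ((σ:ℂ)-1)
      = Complex.Gamma σ * (((σ:ℂ)-1) * hurwitzZeta a σ) := by ring
    _ = ((σ:ℂ)-1) * (M1 a σ + M3 a σ) + 1 := hφσ
    _ = (M1 a σ + M3 a σ + 1/((σ:ℂ)-1)) * ((σ:ℂ)-1) := by field_simp

-- conversion helper
lemma cpow_ofReal_smul {σ t : ℝ} (ht : 0 < t) (g : ℝ) :
    (t:ℂ)^((σ:ℂ)-1) • ((g : ℝ) : ℂ) = ((t^(σ-1) * g : ℝ) : ℂ) := by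
  have h1 : ((σ:ℂ)-1) = ((σ-1 : ℝ) : ℂ) := by push_cast; ring
  rw [h1, ← Complex.ofReal_cpow ht.le, smul_eq_mul, ← Complex.ofReal_mul]

lemma M1_real (a σ : ℝ) : M1 a σ = ((∫ t in Ioc (0:ℝ) 1, t^(σ-1) * Fr a t : ℝ) : ℂ) :=
  calc M1 a σ = ∫ t in Ioc (0:ℝ) 1, (t:ℂ)^((σ:ℂ)-1) • Fc a t := by
        rw [M1, mellin_indicator _ measurableSet_Ioc (fun t ht ↦ ht.1)]
    _ = ∫ t in Ioc (0:ℝ) 1, ((t^(σ-1) * Fr a t : ℝ) : ℂ) :=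
        setIntegral_congr_fun measurableSet_Ioc (fun t ht ↦ cpow_ofReal_smul ht.1 _)
    _ = _ := integral_ofReal

lemma M3_real (a σ : ℝ) : M3 a σ = ((∫ t in Ioi (1:ℝ), t^(σ-1) * Gr a t : ℝ) : ℂ) :=
  calc M3 a σ = ∫ t in Ioi (1:ℝ), (t:ℂ)^((σ:ℂ)-1) • Gc a t := by
        rw [M3, mellin_indicator _ measurableSet_Ioi (fun t ht ↦ mem_Ioi.mpr (lt_trans zero_lt_one (mem_Ioi.mp ht)))]
    _ = ∫ t in Ioi (1:ℝ), ((t^(σ-1) * Gr a t : ℝ) : ℂ) :=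
        setIntegral_congr_fun measurableSet_Ioi
          (fun t ht ↦ cpow_ofReal_smul (lt_trans zero_lt_one ht) _)
    _ = _ := integral_ofReal

lemma int_Gr_Ioi1 {a σ : ℝ} (ha : 1/2 ≤ a) (ha1 : a ≤ 1) (h0 : 0 < σ) (h1 : σ < 1) :
    ∫ t in Ioi (1:ℝ), t^(σ-1) * Gr a t
      = (∫ t in Ioi (1:ℝ), t^(σ-1) * Fr a t) - 1/(σ-1) := by
  have hFrI : IntegrableOn (fun t : ℝ ↦ t^(σ-1) * Fr a t) (Ioi 1) :=
    (intFr ha ha1 h0 h1).mono_set (Ioi_subset_Ioi zero_le_one)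
  have hpow : IntegrableOn (fun t : ℝ ↦ t^(σ-2)) (Ioi 1) :=
    integrableOn_Ioi_rpow_of_lt (by linarith) zero_lt_one
  have hval : (∫ t in Ioi (1:ℝ), t^(σ-2)) = -1/(σ-1) := by
    rw [integral_Ioi_rpow_of_lt (by linarith) zero_lt_one,
      show σ-2+1 = σ-1 by ring, Real.one_rpow]
  have hcongr : ∀ t ∈ Ioi (1:ℝ), t^(σ-1) * Gr a t = t^(σ-1) * Fr a t + t^(σ-2) := by
    intro t ht
    have ht0 : (0:ℝ) < t := lt_trans zero_lt_one ht
    have hG : Gr a t = Fr a t + 1/t := by rw [Fr, Gr]; ring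
    have hp : t^(σ-2) = t^(σ-1) * t⁻¹ := by
      rw [← Real.rpow_neg_one t, ← Real.rpow_add ht0]
      congr 1
      ring
    rw [hG, hp, one_div]
    ring
  rw [setIntegral_congr_fun measurableSet_Ioi hcongr, integral_add hFrI hpow, hval]
  ring

lemma Gamma_mul_zeta_real {a σ : ℝ} (ha : 1/2 ≤ a) (ha1 : a ≤ 1) (h0 : 0 < σ) (h1 : σ < 1) :
    Complex.Gamma σ * hurwitzZeta a σ = ((∫ t in Ioi (0:ℝ), t^(σ-1) * Fr a t : ℝ) : ℂ) := by
  rw [continuation ha ha1 h0 h1, M1_real, M3_real,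
    show (1/((σ:ℂ)-1)) = (((1/(σ-1) : ℝ)):ℂ) by push_cast; ring,
    ← Complex.ofReal_add, ← Complex.ofReal_add]
  congr 1
  rw [int_Gr_Ioi1 ha ha1 h0 h1]
  have hsplit : Ioi (0:ℝ) = Ioc 0 1 ∪ Ioi 1 := (Ioc_union_Ioi_eq_Ioi zero_le_one).symm
  have hint := intFr ha ha1 h0 h1
  rw [hsplit, setIntegral_union (Ioc_disjoint_Ioi le_rfl) measurableSet_Ioi
    (hint.mono_set (by rw [hsplit]; exact subset_union_left))
    (hint.mono_set (by rw [hsplit]; exact subset_union_right))]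
  ring

lemma C_neg {a σ : ℝ} (ha : 1/2 ≤ a) (ha1 : a ≤ 1) (h0 : 0 < σ) (h1 : σ < 1) :
    (∫ t in Ioi (0:ℝ), t^(σ-1) * Fr a t) < 0 := by
  have hint : IntegrableOn (fun t : ℝ ↦ -(t^(σ-1) * Fr a t)) (Ioi 0) :=
    (intFr ha ha1 h0 h1).neg
  have hpos : 0 < ∫ t in Ioi (0:ℝ), -(t^(σ-1) * Fr a t) := by
    rw [setIntegral_pos_iff_support_of_nonneg_ae ?_ hint]
    · have hsub : Ioi (0:ℝ) ⊆ Function.support (fun t ↦ -(t^(σ-1) * Fr a t)) := by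
        intro t ht
        have h2 := Fr_neg ha (mem_Ioi.mp ht)
        have h3 : (0:ℝ) < t^(σ-1) := Real.rpow_pos_of_pos (mem_Ioi.mp ht) _
        simp only [Function.mem_support]
        intro hcontra
        nlinarith
      rw [inter_eq_self_of_subset_right hsub, Real.volume_Ioi]
      norm_num
    · filter_upwards [ae_restrict_mem measurableSet_Ioi] with t ht
      have h2 := Fr_neg ha (mem_Ioi.mp ht)
      have h3 : (0:ℝ) < t^(σ-1) := Real.rpow_pos_of_pos (mem_Ioi.mp ht) _
      simp only [Pi.zero_apply]
      nlinarith
  rw [integral_neg] at hpos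
  linarith

lemma subst_exp (a σ : ℝ) :
    (∫ y : ℝ, Real.exp (σ*y) * Fr a (Real.exp y))
      = ∫ t in Ioi (0:ℝ), t^(σ-1) * Fr a t := by
  have := integral_image_eq_integral_abs_deriv_smul MeasurableSet.univ
    (fun x _ ↦ (Real.hasDerivAt_exp x).hasDerivWithinAt)
    (Real.exp_injective.injOn) (fun t : ℝ ↦ t^(σ-1) * Fr a t)
  rw [image_univ, Real.range_exp] at this
  rw [this, Measure.restrict_univ]
  apply integral_congr_ae
  filter_upwards with y
  rw [smul_eq_mul, abs_of_pos (Real.exp_pos y)]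
  have h1 : (Real.exp y)^(σ-1) = Real.exp ((σ-1)*y) := by
    rw [Real.rpow_def_of_pos (Real.exp_pos y), Real.log_exp, mul_comm]
  rw [h1, ← mul_assoc, ← Real.exp_add]
  ring_nf

end HurwitzDensityAux

open Real Set Filter Asymptotics Topology HurwitzZeta in
/-- For 1/2 ≤ a ≤ 1 and 0 < σ < 1, with C = Γ(σ)ζ(σ,a) (the Hurwitz
zeta value, which is real), the function
P(y) = (e^{σy}/C)(exp((1−a)e^y)/(exp(e^y)−1) − e^{-y}) is a probability density on ℝ. -/
theorem hurwitz_density (σ a : ℝ) (ha : 1 / 2 ≤ a) (ha1 : a ≤ 1)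
    (hσ0 : 0 < σ) (hσ1 : σ < 1) (zr : ℝ)
    (hzr : HurwitzZeta.hurwitzZeta (a : UnitAddCircle) (σ : ℂ) = (zr : ℂ)) :
    (∀ y : ℝ, 0 ≤ Real.exp (σ * y) / (Real.Gamma σ * zr)
        * (Real.exp ((1 - a) * Real.exp y) / (Real.exp (Real.exp y) - 1)
            - Real.exp (-y))) ∧
    (∫ y : ℝ, Real.exp (σ * y) / (Real.Gamma σ * zr)
        * (Real.exp ((1 - a) * Real.exp y) / (Real.exp (Real.exp y) - 1)
            - Real.exp (-y))) = 1 := by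
  have hkey := Gamma_mul_zeta_real ha ha1 hσ0 hσ1
  rw [hzr, Complex.Gamma_ofReal] at hkey
  have hC : Real.Gamma σ * zr = ∫ t in Ioi (0:ℝ), t^(σ-1) * Fr a t := by
    exact_mod_cast hkey
  have hCneg : Real.Gamma σ * zr < 0 := by rw [hC]; exact C_neg ha ha1 hσ0 hσ1
  have hCne : Real.Gamma σ * zr ≠ 0 := ne_of_lt hCneg
  have hFr_eq : ∀ y : ℝ, Real.exp ((1-a)*Real.exp y)/(Real.exp (Real.exp y) - 1)
      - Real.exp (-y) = Fr a (Real.exp y) := by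
    intro y
    rw [Fr, Real.exp_neg, one_div]
  constructor
  · intro y
    rw [hFr_eq]
    have h2 : Fr a (Real.exp y) < 0 := Fr_neg ha (Real.exp_pos y)
    have h3 : Real.exp (σ*y) / (Real.Gamma σ * zr) ≤ 0 :=
      div_nonpos_of_nonneg_of_nonpos (Real.exp_pos _).le hCneg.le
    nlinarith
  · have heq : (fun y : ℝ ↦ Real.exp (σ * y) / (Real.Gamma σ * zr)
        * (Real.exp ((1 - a) * Real.exp y) / (Real.exp (Real.exp y) - 1) - Real.exp (-y)))
        = fun y : ℝ ↦ (Real.Gamma σ * zr)⁻¹ * (Real.exp (σ*y) * Fr a (Real.exp y)) := by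
      funext y
      rw [hFr_eq y]
      ring
    rw [heq, integral_const_mul, subst_exp, ← hC, inv_mul_cancel₀ hCne]
end

section
/- Define ℋ(a; x, y) = H(a, x+y)/(e^y − 1) + H(1, y)/(x + y) for x, y > 0, where H(a,x) = e^{(1-a)x}/(e^x − 1) − 1/x. Then ℋ(a; x, y) < 0 for all x, y > 0 if and only if a ≥ 1/2 (for 0 < a ≤ 1). -/
open Real Finset

-- cubic bounds on exp for 0 ≤ x ≤ 1
lemma exp_cubic_bounds {x : ℝ} (h0 : 0 ≤ x) (h1 : x ≤ 1) :
    1 + x + x^2/2 - (2/9)*x^3 ≤ Real.exp x ∧ Real.exp x ≤ 1 + x + x^2/2 + (2/9)*x^3 := by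
  have hb := Real.exp_bound (x := x) (by rwa [abs_of_nonneg h0]) (n := 3) (by norm_num)
  rw [abs_of_nonneg h0] at hb
  have hs : ∑ m ∈ range 3, x ^ m / m.factorial = 1 + x + x^2/2 := by
    simp [Finset.sum_range_succ]
  rw [hs] at hb
  norm_num [Nat.factorial] at hb
  have := abs_le.1 hb
  constructor <;> nlinarith [this.1, this.2]

-- (1-y) * exp y ≤ 1
lemma one_sub_mul_exp_le (y : ℝ) : (1 - y) * Real.exp y ≤ 1 := by
  have h := Real.add_one_le_exp (-y)
  have h2 : Real.exp (-y) * Real.exp y = 1 := by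
    rw [← Real.exp_add]; simp
  nlinarith [Real.exp_pos y]

lemma exp_le_one_add_two {y : ℝ} (h0 : 0 ≤ y) (h1 : y ≤ 1/2) :
    Real.exp y ≤ 1 + 2*y := by
  have h := one_sub_mul_exp_le y
  nlinarith [Real.exp_pos y]

-- key inequality for the backward direction
lemma key_sinh {s : ℝ} (hs : 0 < s) : s * Real.exp (s/2) < Real.exp s - 1 := by
  have h : s/2 < Real.sinh (s/2) := Real.self_lt_sinh_iff.2 (by linarith)
  rw [Real.sinh_eq] at h
  have hE : Real.exp (-(s/2)) * Real.exp (s/2) = 1 := by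
    rw [← Real.exp_add]; simp
  have hs2 : Real.exp s = Real.exp (s/2) * Real.exp (s/2) := by
    rw [← Real.exp_add]; norm_num
  nlinarith [Real.exp_pos (s/2), Real.exp_pos (-(s/2))]

set_option maxHeartbeats 1000000 in
/-- With H(a,x) = e^{(1-a)x}/(e^x − 1) − 1/x and
ℋ(a;x,y) = H(a,x+y)/(e^y − 1) + H(1,y)/(x+y), for 0 < a ≤ 1 we have
ℋ(a;x,y) < 0 for all x, y > 0 if and only if a ≥ 1/2. -/
theorem calH_neg_iff (a : ℝ) (ha : 0 < a) (ha1 : a ≤ 1) :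
    (∀ x y : ℝ, 0 < x → 0 < y →
        (Real.exp ((1 - a) * (x + y)) / (Real.exp (x + y) - 1) - 1 / (x + y))
            / (Real.exp y - 1)
          + (Real.exp ((1 - 1) * y) / (Real.exp y - 1) - 1 / y) / (x + y) < 0)
      ↔ 1 / 2 ≤ a := by
  constructor
  · intro h
    by_contra hlt
    push_neg at hlt
    obtain ⟨ε, hεdef⟩ : ∃ e : ℝ, e = 1/2 - a := ⟨_, rfl⟩
    have hε0 : 0 < ε := by rw [hεdef]; linarith
    have hε1 : ε < 1/2 := by rw [hεdef]; linarith
    have hy : (0:ℝ) < ε^2/32 := by positivity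
    have hx : (0:ℝ) < ε/2 - ε^2/32 := by nlinarith
    have H := h (ε/2 - ε^2/32) (ε^2/32) hx hy
    have hxy : (ε/2 - ε^2/32) + ε^2/32 = ε/2 := by ring
    rw [hxy] at H
    obtain ⟨y, hydef⟩ : ∃ t : ℝ, t = ε^2/32 := ⟨_, rfl⟩
    rw [← hydef] at H hy hx
    have h11 : Real.exp ((1 - 1) * y) = 1 := by norm_num
    rw [h11] at H
    have hs0 : (0:ℝ) < ε/2 := by linarith
    have hs1 : ε/2 ≤ 1 := by linarith
    have hb1 : 1 - a = 1/2 + ε := by rw [hεdef]; ring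
    have hbs0 : 0 ≤ (1 - a) * (ε/2) := by nlinarith
    have hbs1 : (1 - a) * (ε/2) ≤ 1 := by nlinarith
    have e1 := (exp_cubic_bounds hbs0 hbs1).1
    have e2 := (exp_cubic_bounds hs0.le hs1).2
    have hden : (0:ℝ) < Real.exp (ε/2) - 1 := by
      nlinarith [Real.add_one_lt_exp (ne_of_gt hs0)]
    -- main lower bound : H(a, ε/2) ≥ ε/4
    have hA : ε/4 ≤ Real.exp ((1 - a) * (ε/2)) / (Real.exp (ε/2) - 1) - 1 / (ε/2) := by
      rw [hb1] at e1
      have p1 : (0:ℝ) ≤ (ε + ε^2) * (ε/2)^2 := by positivity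
      have q : ((1:ℝ)/2 + ε)^3 ≤ 1 := by nlinarith
      have p2 : (0:ℝ) ≤ (1 - (1/2+ε)^3) * (ε/2)^3 := by
        apply mul_nonneg (by linarith) (by positivity)
      have e1' : 1 + (1/2+ε)*(ε/2) + (ε/2)^2/8 - (2/9)*(ε/2)^3
          ≤ Real.exp ((1/2+ε)*(ε/2)) := by nlinarith [e1, p1, p2]
      rw [hb1, div_sub_div _ _ (ne_of_gt hden) (ne_of_gt hs0),
        le_div_iff₀ (by positivity)]
      have key1 := mul_le_mul_of_nonneg_right e1' hs0.le
      have key2 := mul_le_mul_of_nonneg_left e2 (show (0:ℝ) ≤ ε^2/8 + 1 by positivity)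
      have h4 : ε^4 ≤ ε^3/2 := by nlinarith [pow_pos hε0 3]
      have h5 : ε^5 ≤ ε^3/4 := by nlinarith [pow_pos hε0 3, pow_pos hε0 4]
      have poly : ε/4 * (((1 + ε/2 + (ε/2)^2/2 + (2/9)*(ε/2)^3) - 1) * (ε/2))
          ≤ (1 + (1/2+ε)*(ε/2) + (ε/2)^2/8 - (2/9)*(ε/2)^3) * (ε/2)
            - ((1 + ε/2 + (ε/2)^2/2 + (2/9)*(ε/2)^3) - 1) := by
        nlinarith [h4, h5, pow_pos hε0 3]
      nlinarith [key1, key2, poly]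
    -- second term : H(1,y) ≥ -1
    have hy12 : y ≤ 1/2 := by rw [hydef]; nlinarith
    have hEy1 : y < Real.exp y - 1 := by
      nlinarith [Real.add_one_lt_exp (ne_of_gt hy)]
    have hEy0 : (0:ℝ) < Real.exp y - 1 := by linarith
    have hEy2 : Real.exp y - 1 ≤ 2*y := by
      have := exp_le_one_add_two hy.le hy12
      linarith
    have hB : (-1:ℝ) ≤ 1 / (Real.exp y - 1) - 1 / y := by
      have h2 : (1 - y) / y ≤ 1 / (Real.exp y - 1) := by
        rw [div_le_div_iff₀ hy hEy0]
        nlinarith [one_sub_mul_exp_le y]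
      have h3 : (1 - y)/y - 1/y = -1 := by field_simp; ring
      linarith
    -- combine
    have hT1 : (ε/4) / (2*y) ≤ (Real.exp ((1 - a) * (ε/2)) / (Real.exp (ε/2) - 1) - 1/(ε/2))
        / (Real.exp y - 1) := by
      calc (ε/4) / (2*y) ≤ (ε/4) / (Real.exp y - 1) := by
            apply div_le_div_of_nonneg_left (by positivity) hEy0 hEy2
        _ ≤ _ := by
            exact div_le_div_of_nonneg_right hA hEy0.le
    have hT2 : (-1:ℝ)/(ε/2) ≤ (1 / (Real.exp y - 1) - 1 / y) / (ε/2) := by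
      apply div_le_div_of_nonneg_right hB hs0.le
    have c1 : (ε/4) / (2*y) = 4/ε := by
      rw [hydef]; field_simp; ring
    have c2 : (-1:ℝ)/(ε/2) = -(2/ε) := by
      field_simp
    have hpos : 0 < 2/ε := by positivity
    rw [c1] at hT1
    rw [c2] at hT2
    have : 4/ε - 2/ε = 2/ε := by ring
    linarith
  · intro h2 x y hx hy
    have hs : 0 < x + y := by linarith
    have hEy : (0:ℝ) < Real.exp y - 1 := by
      nlinarith [Real.add_one_lt_exp (ne_of_gt hy)]
    have hEs : (0:ℝ) < Real.exp (x+y) - 1 := by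
      nlinarith [Real.add_one_lt_exp (ne_of_gt hs)]
    have key := key_sinh hs
    have h1a : Real.exp ((1-a)*(x+y)) ≤ Real.exp ((x+y)/2) := by
      apply Real.exp_le_exp.2
      nlinarith
    have t1 : Real.exp ((1 - a) * (x + y)) / (Real.exp (x + y) - 1) - 1 / (x + y) < 0 := by
      rw [sub_neg, div_lt_div_iff₀ hEs hs]
      nlinarith [mul_le_mul_of_nonneg_right h1a hs.le]
    have t2 : Real.exp ((1 - 1) * y) / (Real.exp y - 1) - 1 / y < 0 := by
      have h11 : Real.exp ((1 - 1) * y) = 1 := by norm_num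
      rw [h11, sub_neg, div_lt_div_iff₀ hEy hy]
      nlinarith [Real.add_one_lt_exp (ne_of_gt hy)]
    have u1 := div_neg_of_neg_of_pos t1 hEy
    have u2 := div_neg_of_neg_of_pos t2 hs
    linarith
end
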